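/- arXiv:0901.3691 — 11 statements merged into one kernel-verified Lean document; each statement's English description precedes it below -/
import Mathlib

section
/- For any positive integers n, a, b with gcd(a, b) = 1, n! divides the product (a+b)(a+2b)···(a+nb) if and only if gcd(n!, b) = 1. -/
lemma prod_icc_asc (m n : ℕ) :
    ∏ i ∈ Finset.Icc 1 n, (m + i) = (m + 1).ascFactorial n := by
  induction n with
  | zero => simp
  | succ k ih =>
      rw [Finset.prod_Icc_succ_top (by omega : 1 ≤ k + 1), ih, Nat.ascFactorial_succ]
      ring

theorem stmt0 (n a b : ℕ) (hn : 0 < n) (ha : 0 < a) (hb : 0 < b)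
    (hab : Nat.gcd a b = 1) :
    (n.factorial ∣ ∏ i ∈ Finset.Icc 1 n, (a + b * i)) ↔
      Nat.gcd n.factorial b = 1 := by
  constructor
  · intro hdvd
    by_contra hg
    obtain ⟨p, hp, hpd⟩ := Nat.exists_prime_and_dvd hg
    have hpN : p ∣ n.factorial := hpd.trans (Nat.gcd_dvd_left _ _)
    have hpb : p ∣ b := hpd.trans (Nat.gcd_dvd_right _ _)
    have hpa : ¬ p ∣ a := fun h => hp.one_lt.ne' (Nat.eq_one_of_dvd_coprimes hab h hpb)
    have hpP : p ∣ ∏ i ∈ Finset.Icc 1 n, (a + b * i) := hpN.trans hdvd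
    haveI : Fact p.Prime := ⟨hp⟩
    have h0 : ((∏ i ∈ Finset.Icc 1 n, (a + b * i) : ℕ) : ZMod p) = 0 :=
      (ZMod.natCast_eq_zero_iff _ _).2 hpP
    rw [Nat.cast_prod] at h0
    have hb0 : (b : ZMod p) = 0 := (ZMod.natCast_eq_zero_iff _ _).2 hpb
    have ha0 : (a : ZMod p) ≠ 0 := fun h => hpa ((ZMod.natCast_eq_zero_iff _ _).1 h)
    simp only [Nat.cast_add, Nat.cast_mul, hb0, zero_mul, add_zero,
      Finset.prod_const] at h0
    rw [Nat.card_Icc] at h0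
    exact ha0 (pow_eq_zero_iff (by omega : n + 1 - 1 ≠ 0) |>.1 h0)
  · intro hg
    set N := n.factorial with hN
    rcases eq_or_lt_of_le (Nat.one_le_iff_ne_zero.2 n.factorial_ne_zero) with h1 | h1
    · rw [show N = 1 from hN.trans h1.symm]; exact one_dvd _
    have hcop : Nat.Coprime b N := Nat.coprime_comm.1 hg
    obtain ⟨c, -, hc⟩ := Nat.exists_mul_mod_eq_one_of_coprime hcop h1
    have hbc1 : ((b : ZMod N) * c) = 1 := by
      rw [← Nat.cast_mul, ← ZMod.natCast_mod, hc, Nat.cast_one]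
    have hcard : (Finset.Icc 1 n).card = n := by simp
    have hdvd0 : N ∣ ∏ i ∈ Finset.Icc 1 n, (a * c + i) := by
      rw [prod_icc_asc]
      exact Nat.factorial_dvd_ascFactorial _ _
    have h0 : ((∏ i ∈ Finset.Icc 1 n, (a * c + i) : ℕ) : ZMod N) = 0 :=
      (ZMod.natCast_eq_zero_iff _ _).2 hdvd0
    have hkey : ((∏ i ∈ Finset.Icc 1 n, (a + b * i) : ℕ) : ZMod N) * (c : ZMod N) ^ n
        = 0 := by
      have hcn : (c : ZMod N) ^ n = ∏ _i ∈ Finset.Icc 1 n, (c : ZMod N) := by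
        rw [Finset.prod_const, hcard]
      rw [← h0, hcn, Nat.cast_prod, Nat.cast_prod, ← Finset.prod_mul_distrib]
      apply Finset.prod_congr rfl
      intro i _
      push_cast
      calc ((a : ZMod N) + b * i) * c = a * c + i * (b * c) := by ring
        _ = a * c + i := by rw [hbc1, mul_one]
    have hNdvd : N ∣ (∏ i ∈ Finset.Icc 1 n, (a + b * i)) * c ^ n := by
      have := (ZMod.natCast_eq_zero_iff ((∏ i ∈ Finset.Icc 1 n, (a + b * i)) * c ^ n) N).1
      apply this
      exact_mod_cast hkey
    have hcopc : Nat.Coprime N (c ^ n) := by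
      apply Nat.Coprime.pow_right
      have : IsUnit (c : ZMod N) := IsUnit.of_mul_eq_one _ (by rw [mul_comm]; exact hbc1)
      exact ((ZMod.isUnit_iff_coprime c N).1 this).symm
    exact (Nat.Coprime.dvd_of_dvd_mul_right hcopc hNdvd)
end

section
/- For any positive integers n, a, b with gcd(a, b) = 1 and gcd(n!, b) = 1, n! divides the product (a+b)(a+2b)···(a+nb). -/
lemma prod_Icc_add_eq_ascFactorial (x : ℕ) : ∀ k : ℕ,
    ∏ i ∈ Finset.Icc 1 k, (x + i) = (x + 1).ascFactorial k
  | 0 => by simp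
  | k + 1 => by
    rw [Finset.prod_Icc_succ_top (Nat.le_add_left 1 k), prod_Icc_add_eq_ascFactorial x k,
      Nat.ascFactorial_succ, mul_comm]
    ring_nf

lemma factorial_dvd_prod_Icc (x k : ℕ) : k.factorial ∣ ∏ i ∈ Finset.Icc 1 k, (x + i) := by
  rw [prod_Icc_add_eq_ascFactorial]
  exact Nat.factorial_dvd_ascFactorial _ _

theorem stmt1 (n a b : ℕ) (hn : 0 < n) (ha : 0 < a) (hb : 0 < b)
    (hab : Nat.gcd a b = 1) (hnb : Nat.gcd n.factorial b = 1) :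
    n.factorial ∣ ∏ i ∈ Finset.Icc 1 n, (a + b * i) := by
  rcases eq_or_lt_of_le (Nat.one_le_iff_ne_zero.mpr n.factorial_ne_zero) with h1 | h1
  · rw [← h1]; exact one_dvd _
  obtain ⟨c, -, hc⟩ := Nat.exists_mul_mod_eq_one_of_coprime (Nat.Coprime.symm hnb) h1
  rw [← ZMod.natCast_eq_zero_iff]
  have hbc : ((b : ZMod n.factorial) * c = 1) := by
    have := congrArg (Nat.cast : ℕ → ZMod n.factorial) hc
    rwa [ZMod.natCast_mod, Nat.cast_mul, Nat.cast_one] at this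
  push_cast
  have key : ∀ i ∈ Finset.Icc 1 n, ((a : ZMod n.factorial) + b * i)
      = b * ((c * a + i : ℕ) : ZMod n.factorial) := by
    intro i _
    push_cast
    rw [mul_add, ← mul_assoc, hbc, one_mul]
  rw [Finset.prod_congr rfl key, Finset.prod_mul_distrib, Finset.prod_const,
    ← Nat.cast_prod]
  have h0 : ((∏ i ∈ Finset.Icc 1 n, (c * a + i) : ℕ) : ZMod n.factorial) = 0 :=
    (ZMod.natCast_eq_zero_iff _ _).mpr (factorial_dvd_prod_Icc _ _)
  rw [h0, mul_zero]
end

section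
/- For any positive integers n, a, b with gcd(a, b) = 1 and gcd(n!, b) = 1, the integer (a+b)(a+2b)···(a+nb)/n! can be written as a product ∏_{i=1}^n a_i of positive integers a_i such that a_i divides a + b·i for each i, and gcd(a_i, a_j) = 1 for all 1 ≤ i ≠ j ≤ n. -/
open Finset

/-- Counting elements of a residue class in `Icc 1 n`. -/
lemma count_icc_mod (n m r : ℕ) (hm : 0 < m) :
    n / m ≤ #{i ∈ Icc 1 n | i % m = r % m} ∧
    #{i ∈ Icc 1 n | i % m = r % m} ≤ n / m + 1 := by
  set r0 : ℕ := if r % m = 0 then m else r % m with hr0def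
  have hrm : r % m < m := Nat.mod_lt _ hm
  have hr0m : r0 % m = r % m := by
    rcases eq_or_ne (r % m) 0 with h | h
    · simp [hr0def, h, Nat.mod_self]
    · simp [hr0def, h, Nat.mod_eq_of_lt hrm]
  have hr01 : 1 ≤ r0 := by
    rcases eq_or_ne (r % m) 0 with h | h
    · simp [hr0def, h]; exact hm
    · simp [hr0def, h]; omega
  have hr0le : r0 ≤ m := by
    rcases eq_or_ne (r % m) 0 with h | h
    · simp [hr0def, h]
    · simp [hr0def, h]; omega
  set c : ℕ := if r0 ≤ n then (n - r0) / m + 1 else 0 with hcdef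
  have himg : {i ∈ Icc 1 n | i % m = r % m}
      = (Finset.range c).image (fun t => r0 + m * t) := by
    ext i
    simp only [mem_filter, mem_Icc, Finset.mem_image, Finset.mem_range]
    constructor
    · rintro ⟨⟨h1, h2⟩, h3⟩
      have h3' : i % m = r0 % m := by rw [h3, hr0m]
      have hge : r0 ≤ i := by
        by_contra hlt
        push_neg at hlt
        have hdvd : m ∣ r0 - i := (Nat.modEq_iff_dvd' (n:=m) (le_of_lt hlt)).mp h3'
        have : m ≤ r0 - i := Nat.le_of_dvd (by omega) hdvd
        omega
      obtain ⟨t, ht⟩ := (Nat.modEq_iff_dvd' (n:=m) hge).mp h3'.symm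
      have hteq : i = r0 + m * t := by omega
      have htle : t ≤ (n - r0) / m := by
        rw [Nat.le_div_iff_mul_le hm, mul_comm]; omega
      refine ⟨t, ?_, hteq.symm⟩
      rw [hcdef, if_pos (le_trans hge h2)]
      omega
    · rintro ⟨t, htc, rfl⟩
      have hr0n : r0 ≤ n := by
        by_contra h
        rw [hcdef, if_neg h] at htc; omega
      rw [hcdef, if_pos hr0n] at htc
      have htle : t ≤ (n - r0) / m := by omega
      have : m * t ≤ n - r0 := by
        calc m * t ≤ m * ((n - r0) / m) := Nat.mul_le_mul_left _ htle
          _ ≤ n - r0 := Nat.mul_div_le _ _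
      refine ⟨⟨by omega, by omega⟩, ?_⟩
      rw [Nat.add_mul_mod_self_left, hr0m]
  have hinj : Function.Injective (fun t => r0 + m * t) := by
    intro x y h
    simp only at h
    have : m * x = m * y := by omega
    exact Nat.eq_of_mul_eq_mul_left hm this
  have hcard : #{i ∈ Icc 1 n | i % m = r % m} = c := by
    rw [himg, Finset.card_image_of_injective _ hinj, Finset.card_range]
  rw [hcard]
  rcases le_or_gt r0 n with h | h
  · rw [hcdef, if_pos h]
    constructor
    · have h1 : n ≤ (n - r0) + m := by omega
      have h2 : n / m ≤ ((n - r0) + m) / m := Nat.div_le_div_right h1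
      rwa [Nat.add_div_right _ hm] at h2
    · have : (n - r0) / m ≤ n / m := Nat.div_le_div_right (by omega)
      omega
  · rw [hcdef, if_neg (by omega)]
    have : n / m = 0 := Nat.div_eq_of_lt (by omega)
    omega

/-- Solutions of `m ∣ a + b * i` form a residue class when `gcd b m = 1`. -/
lemma exists_residue (m a b : ℕ) (hm : 0 < m) (hcop : Nat.Coprime b m) :
    ∃ r, ∀ i, (m ∣ a + b * i ↔ i % m = r % m) := by
  haveI : NeZero m := ⟨hm.ne'⟩
  obtain ⟨u, hu⟩ := (ZMod.isUnit_iff_coprime b m).2 hcop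
  set x : ZMod m := -(a : ZMod m) * ↑u⁻¹ with hx
  refine ⟨x.val, fun i => ?_⟩
  have hxv : ((x.val : ℕ) : ZMod m) = x := by
    rw [ZMod.natCast_val, ZMod.cast_id]
  have h1 : (i % m = x.val % m) ↔ ((i : ZMod m) = x) := by
    constructor
    · intro h
      rw [← hxv]
      exact (ZMod.natCast_eq_natCast_iff _ _ _).2 h
    · intro h
      exact (ZMod.natCast_eq_natCast_iff _ _ _).1 (by rw [hxv]; exact h)
  rw [← ZMod.natCast_eq_zero_iff, h1]
  push_cast
  constructor
  · intro h
    have hbi : (u : ZMod m) * i = -(a : ZMod m) := by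
      rw [hu]
      linear_combination h
    calc (i : ZMod m) = ↑u⁻¹ * (↑u * ↑i) := by rw [← mul_assoc, u.inv_mul, one_mul]
      _ = ↑u⁻¹ * (-(a : ZMod m)) := by rw [hbi]
      _ = x := by rw [hx]; ring
  · intro h
    rw [h, ← hu, hx]
    calc (a : ZMod m) + ↑u * (-(a : ZMod m) * ↑u⁻¹)
        = (a : ZMod m) + (-(a : ZMod m)) * (↑u * ↑u⁻¹) := by ring
      _ = 0 := by rw [u.mul_inv]; ring


/-- Per-prime bounds: Legendre-type estimate for the product. -/
lemma padic_bounds {p : ℕ} (hp : p.Prime) (n a b : ℕ) (ha : 0 < a) (hpb : ¬ p ∣ b) :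
    (n.factorial.factorization p ≤
      (∏ i ∈ Finset.Icc 1 n, (a + b * i)).factorization p) ∧
    (∀ M : ℕ, (∀ i ∈ Finset.Icc 1 n, (a + b * i).factorization p ≤ M) →
      (∏ i ∈ Finset.Icc 1 n, (a + b * i)).factorization p ≤
        n.factorial.factorization p + M) := by
  haveI := Fact.mk hp
  have hx : ∀ i : ℕ, 0 < a + b * i := fun i => Nat.lt_of_lt_of_le ha (Nat.le_add_right _ _)
  set B : ℕ := a + b * n + n.factorial with hB
  have hfac_pos := Nat.factorial_pos n
  have hBfac : Nat.log p n < B + 1 := by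
    have h1 := Nat.log_le_self p n
    have h2 := Nat.self_le_factorial n
    omega
  have hfact : n.factorial.factorization p = ∑ k ∈ Icc 1 B, n / p ^ k := by
    rw [Nat.factorization_def _ hp, padicValNat_factorial (n := n) (b := B + 1) hBfac,
      Finset.Ico_add_one_right_eq_Icc]
  have hxB : ∀ i ∈ Icc 1 n, a + b * i ≤ p ^ B := by
    intro i hi
    have hin : i ≤ n := (mem_Icc.mp hi).2
    have h1 : a + b * i ≤ B := by
      have : b * i ≤ b * n := Nat.mul_le_mul_left _ hin
      omega
    calc a + b * i ≤ B := h1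
      _ ≤ 2 ^ B := Nat.le_of_lt (Nat.lt_two_pow_self)
      _ ≤ p ^ B := Nat.pow_le_pow_left hp.two_le B
  have hxfac : ∀ i ∈ Icc 1 n, (a + b * i).factorization p
      = #{k ∈ Icc 1 B | p ^ k ∣ a + b * i} := by
    intro i hi
    rw [Nat.factorization_eq_card_pow_dvd _ hp,
      Nat.Ico_filter_pow_dvd_eq hp (hx i).ne' (hxB i hi)]
  have hprod : (∏ i ∈ Icc 1 n, (a + b * i)).factorization p
      = ∑ k ∈ Icc 1 B, #{i ∈ Icc 1 n | p ^ k ∣ a + b * i} := by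
    rw [Nat.factorization_prod (fun i _ => (hx i).ne')]
    rw [Finset.sum_apply']
    rw [Finset.sum_congr rfl hxfac]
    simp only [Finset.card_filter]
    rw [Finset.sum_comm]
  have hck : ∀ k ∈ Icc 1 B,
      n / p ^ k ≤ #{i ∈ Icc 1 n | p ^ k ∣ a + b * i} ∧
      #{i ∈ Icc 1 n | p ^ k ∣ a + b * i} ≤ n / p ^ k + 1 := by
    intro k _
    have hm : 0 < p ^ k := pow_pos hp.pos k
    have hcop : Nat.Coprime b (p ^ k) :=
      Nat.Coprime.pow_right _ ((Nat.Prime.coprime_iff_not_dvd hp).2 hpb).symm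
    obtain ⟨r, hr⟩ := exists_residue (p ^ k) a b hm hcop
    have heq : {i ∈ Icc 1 n | p ^ k ∣ a + b * i}
        = {i ∈ Icc 1 n | i % p ^ k = r % p ^ k} := by
      apply Finset.filter_congr
      intro i _
      exact hr i
    rw [heq]
    exact count_icc_mod n (p ^ k) r hm
  constructor
  · rw [hfact, hprod]
    exact Finset.sum_le_sum fun k hk => (hck k hk).1
  · intro M hM
    rw [hfact, hprod]
    have step : ∀ k ∈ Icc 1 B, #{i ∈ Icc 1 n | p ^ k ∣ a + b * i}
        ≤ n / p ^ k + (if k ≤ M then 1 else 0) := by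
      intro k hk
      by_cases hkM : k ≤ M
      · simpa [hkM] using (hck k hk).2
      · simp only [hkM, if_false, add_zero]
        have hempty : {i ∈ Icc 1 n | p ^ k ∣ a + b * i} = ∅ := by
          rw [Finset.filter_eq_empty_iff]
          intro i hi hdvd
          have hle : k ≤ (a + b * i).factorization p :=
            (Nat.Prime.pow_dvd_iff_le_factorization hp (hx i).ne').1 hdvd
          exact hkM (le_trans hle (hM i hi))
        simp [hempty]
    calc ∑ k ∈ Icc 1 B, #{i ∈ Icc 1 n | p ^ k ∣ a + b * i}
        ≤ ∑ k ∈ Icc 1 B, (n / p ^ k + (if k ≤ M then 1 else 0)) :=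
          Finset.sum_le_sum step
      _ = (∑ k ∈ Icc 1 B, n / p ^ k) + ∑ k ∈ Icc 1 B, (if k ≤ M then 1 else 0) :=
          Finset.sum_add_distrib
      _ ≤ (∑ k ∈ Icc 1 B, n / p ^ k) + M := by
          apply add_le_add_right
          rw [← Finset.card_filter]
          calc #{k ∈ Icc 1 B | k ≤ M} ≤ #(Icc 1 M) := by
                apply Finset.card_le_card
                intro k hk
                simp only [mem_filter, mem_Icc] at hk ⊢
                omega
            _ = M := by rw [Nat.card_Icc]; omega


lemma prod_dvd_of_coprime' {s : Finset ℕ} {g : ℕ → ℕ} {x : ℕ}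
    (hcop : ∀ p ∈ s, ∀ q ∈ s, p ≠ q → Nat.Coprime (g p) (g q))
    (hdvd : ∀ p ∈ s, g p ∣ x) : (∏ p ∈ s, g p) ∣ x := by
  induction s using Finset.induction with
  | empty => simpa using one_dvd x
  | @insert a s ha ih =>
    rw [Finset.prod_insert ha]
    apply Nat.Coprime.mul_dvd_of_dvd_of_dvd
    · apply Nat.Coprime.prod_right
      intro q hq
      exact hcop a (Finset.mem_insert_self a s) q (Finset.mem_insert_of_mem hq)
        (fun h => ha (h ▸ hq))
    · exact hdvd a (Finset.mem_insert_self a s)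
    · exact ih (fun p hp q hq hne => hcop p (Finset.mem_insert_of_mem hp) q
        (Finset.mem_insert_of_mem hq) hne) (fun p hp => hdvd p (Finset.mem_insert_of_mem hp))

theorem stmt3 (n a b : ℕ) (hn : 0 < n) (ha : 0 < a) (hb : 0 < b)
    (hab : Nat.gcd a b = 1) (hnb : Nat.gcd n.factorial b = 1) :
    ∃ f : ℕ → ℕ,
      (∏ i ∈ Finset.Icc 1 n, (a + b * i)) / n.factorial =
        ∏ i ∈ Finset.Icc 1 n, f i ∧
      (∀ i ∈ Finset.Icc 1 n, 0 < f i ∧ f i ∣ a + b * i) ∧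
      (∀ i ∈ Finset.Icc 1 n, ∀ j ∈ Finset.Icc 1 n, i ≠ j →
        Nat.gcd (f i) (f j) = 1) := by
  have hx : ∀ i : ℕ, 0 < a + b * i := fun i => Nat.lt_of_lt_of_le ha (Nat.le_add_right _ _)
  set P : ℕ := ∏ i ∈ Icc 1 n, (a + b * i) with hPdef
  have hPpos : 0 < P := Finset.prod_pos fun i _ => hx i
  have hfac0 : n.factorial ≠ 0 := (Nat.factorial_pos n).ne'
  have hmem_n : n ∈ Icc 1 n := mem_Icc.2 ⟨hn, le_refl n⟩
  have hdvd : n.factorial ∣ P := by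
    rw [← Nat.factorization_le_iff_dvd hfac0 hPpos.ne']
    rw [Finsupp.le_def]
    intro p
    by_cases hpp : p.Prime
    · by_cases hpb : p ∣ b
      · have hnd : ¬ p ∣ n.factorial := by
          intro hpf
          have h1 : p ∣ Nat.gcd n.factorial b := Nat.dvd_gcd hpf hpb
          rw [hnb] at h1
          have := Nat.le_of_dvd one_pos h1
          have := hpp.two_le
          omega
        rw [Nat.factorization_eq_zero_of_not_dvd hnd]
        exact Nat.zero_le _
      · exact (padic_bounds hpp n a b ha hpb).1
    · simp [Nat.factorization_eq_zero_of_not_prime _ hpp]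
  set N : ℕ := P / n.factorial with hNdef
  have hNP : N ∣ P := Nat.div_dvd_of_dvd hdvd
  have hN0 : N ≠ 0 := (Nat.div_pos (Nat.le_of_dvd hPpos hdvd) (Nat.factorial_pos n)).ne'
  have key : ∀ p : ℕ, ∃ i, i ∈ Icc 1 n ∧
      (p ∈ N.primeFactors → N.factorization p ≤ (a + b * i).factorization p) := by
    intro p
    by_cases hp : p ∈ N.primeFactors
    · have hpp : p.Prime := Nat.prime_of_mem_primeFactors hp
      have hpP : p ∣ P := (Nat.dvd_of_mem_primeFactors hp).trans hNP
      have hpb : ¬ p ∣ b := by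
        intro hpb
        obtain ⟨i, hi, hpi⟩ := hpp.prime.exists_mem_finset_dvd hpP
        have h2 : p ∣ b * i := hpb.mul_right i
        have hpa : p ∣ a := by
          have h3 := Nat.dvd_sub hpi h2
          simpa using h3
        have h4 : p ∣ Nat.gcd a b := Nat.dvd_gcd hpa hpb
        rw [hab] at h4
        have := Nat.le_of_dvd one_pos h4
        have := hpp.two_le
        omega
      obtain ⟨i0, hi0, hmax⟩ := Finset.exists_max_image (Icc 1 n)
        (fun i => (a + b * i).factorization p) ⟨n, hmem_n⟩
      have hup := (padic_bounds hpp n a b ha hpb).2 _ hmax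
      have hlo := (padic_bounds hpp n a b ha hpb).1
      refine ⟨i0, hi0, fun _ => ?_⟩
      have hNfac : N.factorization p
          = P.factorization p - n.factorial.factorization p := by
        rw [hNdef, Nat.factorization_div hdvd, Finsupp.tsub_apply]
      rw [← hPdef] at hup hlo
      omega
    · exact ⟨n, hmem_n, fun h => absurd h hp⟩
  choose c hc1 hc2 using key
  refine ⟨fun i => ∏ p ∈ N.primeFactors.filter (fun p => c p = i), p ^ N.factorization p,
    ?_, ?_, ?_⟩
  · show N = _
    rw [Finset.prod_fiberwise_of_maps_to (fun p _ => hc1 p)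
      (fun p => p ^ N.factorization p)]
    have h2 := Nat.factorization_prod_pow_eq_self hN0
    rw [Finsupp.prod] at h2
    exact h2.symm
  · intro i hi
    constructor
    · exact Finset.prod_pos fun p hp =>
        pow_pos (Nat.prime_of_mem_primeFactors (mem_filter.mp hp).1).pos _
    · apply prod_dvd_of_coprime'
      · intro p hp q hq hne
        have hpp := Nat.prime_of_mem_primeFactors (mem_filter.mp hp).1
        have hqq := Nat.prime_of_mem_primeFactors (mem_filter.mp hq).1
        exact Nat.Coprime.pow _ _ ((Nat.coprime_primes hpp hqq).2 hne)
      · intro p hp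
        obtain ⟨hpN, hci⟩ := mem_filter.mp hp
        have hpp := Nat.prime_of_mem_primeFactors hpN
        have hle := hc2 p hpN
        rw [hci] at hle
        exact (Nat.Prime.pow_dvd_iff_le_factorization hpp (hx i).ne').2 hle
  · intro i hi j hj hij
    apply Nat.coprime_prod_left_iff.2
    intro p hp
    apply Nat.coprime_prod_right_iff.2
    intro q hq
    obtain ⟨hpN, hci⟩ := mem_filter.mp hp
    obtain ⟨hqN, hcj⟩ := mem_filter.mp hq
    have hpp := Nat.prime_of_mem_primeFactors hpN
    have hqq := Nat.prime_of_mem_primeFactors hqN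
    exact Nat.Coprime.pow _ _ ((Nat.coprime_primes hpp hqq).2
      (fun h => hij (by rw [← hci, ← hcj, h])))
end

section
/- For any positive integers n, a, b with gcd(a, b) = 1, gcd(n!, b) = 1, and a + b > ∏_{p ≤ n} p^{⌊log_p n⌋} (the least common multiple of 1, 2, ..., n), the integer (a+b)(a+2b)···(a+nb)/n! can be written as ∏_{i=1}^n a_i where each a_i is an integer greater than 1, a_i divides a + b·i, and gcd(a_i, a_j) = 1 for all 1 ≤ i ≠ j ≤ n. -/
open Finset

-- lower bound on count of i in [1,n] with m ∣ a + b*i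
lemma cnt_lb (a b n m : ℕ) (hm : 0 < m) (hcop : Nat.Coprime b m) :
    n / m ≤ #{i ∈ Icc 1 n | m ∣ a + b * i} := by
  obtain ⟨i0, hi01, hi0m, hi0d⟩ : ∃ i0, 1 ≤ i0 ∧ i0 ≤ m ∧ m ∣ a + b * i0 := by
    rcases eq_or_lt_of_le (Nat.succ_le_of_lt hm) with h1 | h1
    · exact ⟨1, le_refl _, h1 ▸ le_refl _, h1 ▸ one_dvd _⟩
    · haveI : NeZero m := ⟨hm.ne'⟩
      set x : ZMod m := (-(a : ZMod m)) * (b : ZMod m)⁻¹ with hx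
      refine ⟨if x.val = 0 then m else x.val, ?_, ?_, ?_⟩
      · split
        · exact hm
        · omega
      · split
        · exact le_refl m
        · exact le_of_lt (ZMod.val_lt x)
      · rw [← ZMod.natCast_eq_zero_iff]
        have hcast : ((if x.val = 0 then m else x.val : ℕ) : ZMod m) = x := by
          split
          · rename_i h
            rw [ZMod.natCast_self]
            exact ((ZMod.val_eq_zero x).mp h).symm
          · simp [ZMod.natCast_val, ZMod.cast_id]
        rw [Nat.cast_add, Nat.cast_mul, hcast, hx]
        have hbinv : (b : ZMod m) * (b : ZMod m)⁻¹ = 1 := ZMod.coe_mul_inv_eq_one b hcop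
        have : (a : ZMod m) + (b : ZMod m) * (-(a : ZMod m) * (b : ZMod m)⁻¹)
            = (a : ZMod m) - ((b : ZMod m) * (b : ZMod m)⁻¹) * a := by ring
        rw [this, hbinv]; ring
  apply le_trans (le_of_eq (Finset.card_range (n / m)).symm)
  apply Finset.card_le_card_of_injOn (fun j => i0 + j * m)
  · intro j hj
    simp only [Finset.mem_coe, Finset.mem_range] at hj
    simp only [Finset.mem_coe, Finset.mem_filter, Finset.mem_Icc]
    refine ⟨⟨by omega, ?_⟩, ?_⟩
    · have : (j + 1) * m ≤ (n / m) * m := Nat.mul_le_mul_right m (by omega)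
      have h2 : (n / m) * m ≤ n := Nat.div_mul_le_self n m
      nlinarith
    · have : a + b * (i0 + j * m) = (a + b * i0) + (b * j) * m := by ring
      rw [this]
      exact Nat.dvd_add hi0d (Dvd.intro_left _ rfl)
  · intro x _ y _ h
    simp only at h
    have := Nat.eq_of_mul_eq_mul_right hm (by omega : x * m = y * m)
    exact this

-- upper bound
lemma cnt_ub (a b n m : ℕ) (hm : 0 < m) (hcop : Nat.Coprime b m) :
    #{i ∈ Icc 1 n | m ∣ a + b * i} ≤ n / m + 1 := by
  set S := ({i ∈ Icc 1 n | m ∣ a + b * i} : Finset ℕ) with hS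
  rcases S.eq_empty_or_nonempty with h | h
  · simp [h]
  · set s := S.min' h with hsdef
    have hsS : s ∈ S := S.min'_mem h
    have hsIcc : s ∈ Icc 1 n := (Finset.mem_filter.mp hsS).1
    have hsd : m ∣ a + b * s := (Finset.mem_filter.mp hsS).2
    have key : ∀ i ∈ S, m ∣ i - s := by
      intro i hi
      have hle : s ≤ i := S.min'_le i hi
      have hid : m ∣ a + b * i := (Finset.mem_filter.mp hi).2
      have : m ∣ (a + b * i) - (a + b * s) := Nat.dvd_sub hid hsd
      have hbb : b * i = b * (i - s) + b * s := by
        rw [← Nat.mul_add]; congr 1; omega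
      have heq : (a + b * i) - (a + b * s) = b * (i - s) := by omega
      rw [heq] at this
      exact (Nat.Coprime.dvd_of_dvd_mul_left (hcop.symm) this)
    calc S.card ≤ (Finset.range (n / m + 1)).card := by
          apply Finset.card_le_card_of_injOn (fun i => (i - s) / m)
          · intro i hi
            simp only [Finset.mem_coe, Finset.mem_range]
            have h1 : i ≤ n := (Finset.mem_Icc.mp (Finset.mem_filter.mp hi).1).2
            have h2 : 1 ≤ s := (Finset.mem_Icc.mp hsIcc).1
            have : i - s ≤ n - 1 := by omega
            have := Nat.div_le_div_right (c := m) this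
            have h3 : (n - 1) / m ≤ n / m := Nat.div_le_div_right (by omega)
            omega
          · intro x hx y hy hxy
            simp only at hxy
            have hx1 : s ≤ x := S.min'_le x hx
            have hy1 : s ≤ y := S.min'_le y hy
            have hdx := Nat.div_mul_cancel (key x hx)
            have hdy := Nat.div_mul_cancel (key y hy)
            have : (x - s) / m * m = (y - s) / m * m := by rw [hxy]
            omega
      _ = n / m + 1 := Finset.card_range _

lemma fact_eq_card {c p K : ℕ} (pp : p.Prime) (hc : c ≠ 0) (hK : c < p ^ K) :
    c.factorization p = #{k ∈ Ico 1 K | p ^ k ∣ c} := by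
  have hset : ({k ∈ Ico 1 K | p ^ k ∣ c} : Finset ℕ) = Icc 1 (c.factorization p) := by
    ext k
    simp only [mem_filter, mem_Ico, mem_Icc, Nat.Prime.pow_dvd_iff_le_factorization pp hc]
    constructor
    · rintro ⟨⟨h1, _⟩, h2⟩; exact ⟨h1, h2⟩
    · rintro ⟨h1, h2⟩
      have hdvd : p ^ k ∣ c := (Nat.Prime.pow_dvd_iff_le_factorization pp hc).mpr h2
      have : p ^ k ≤ c := Nat.le_of_dvd (Nat.pos_of_ne_zero hc) hdvd
      have : p ^ k < p ^ K := lt_of_le_of_lt this hK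
      exact ⟨⟨h1, (Nat.pow_lt_pow_iff_right pp.one_lt).mp this⟩, h2⟩
  rw [hset, Nat.card_Icc]
  omega

lemma sum_fact_eq {s : Finset ℕ} {c : ℕ → ℕ} {p K : ℕ} (pp : p.Prime)
    (hc : ∀ i ∈ s, c i ≠ 0) (hK : ∀ i ∈ s, c i < p ^ K) :
    ∑ i ∈ s, (c i).factorization p
      = ∑ k ∈ Ico 1 K, #{i ∈ s | p ^ k ∣ c i} := by
  have h1 : ∀ i ∈ s, (c i).factorization p = ∑ k ∈ Ico 1 K, if p ^ k ∣ c i then 1 else 0 := by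
    intro i hi
    rw [fact_eq_card pp (hc i hi) (hK i hi), Finset.card_filter]
  rw [Finset.sum_congr rfl h1, Finset.sum_comm]
  apply Finset.sum_congr rfl
  intro k _
  rw [Finset.card_filter]

lemma fact_prod_pow {s : Finset ℕ} (hs : ∀ p ∈ s, p.Prime) (e : ℕ → ℕ) (q : ℕ) :
    (∏ p ∈ s, p ^ e p).factorization q = if q ∈ s then e q else 0 := by
  rw [Nat.factorization_prod (fun p hp => pow_ne_zero _ (hs p hp).pos.ne')]
  rw [Finset.sum_apply']
  have : ∀ p ∈ s, (p ^ e p).factorization q = if p = q then e p else 0 := by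
    intro p hp
    rw [Nat.Prime.factorization_pow (hs p hp), Finsupp.single_apply]
  rw [Finset.sum_congr rfl this, Finset.sum_ite_eq' s q e]

open Nat

theorem stmt4 (n a b : ℕ) (hn : 0 < n) (ha : 0 < a) (hb : 0 < b)
    (hab : Nat.gcd a b = 1) (hnb : Nat.gcd n.factorial b = 1)
    (hbig : a + b >
      ∏ p ∈ (Finset.range (n + 1)).filter Nat.Prime, p ^ Nat.log p n) :
    ∃ f : ℕ → ℕ,
      (∏ i ∈ Finset.Icc 1 n, (a + b * i)) / n.factorial =
        ∏ i ∈ Finset.Icc 1 n, f i ∧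
      (∀ i ∈ Finset.Icc 1 n, 1 < f i ∧ f i ∣ a + b * i) ∧
      (∀ i ∈ Finset.Icc 1 n, ∀ j ∈ Finset.Icc 1 n, i ≠ j →
        Nat.gcd (f i) (f j) = 1) := by
  classical
  have hne : (Icc 1 n).Nonempty := ⟨1, by simp; omega⟩
  set c : ℕ → ℕ := fun i => a + b * i with hcdef
  set P : ℕ := ∏ i ∈ Icc 1 n, c i with hPdef
  have hc0 : ∀ i, c i ≠ 0 := fun i => by simp only [hcdef]; omega
  have hP0 : P ≠ 0 := Finset.prod_ne_zero_iff.mpr fun i _ => hc0 i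
  set K : ℕ := a + b * n + 1 with hKdef
  have hcK : ∀ p : ℕ, 2 ≤ p → ∀ i ∈ Icc 1 n, c i < p ^ K := by
    intro p hp i hi
    have h2 : i ≤ n := (mem_Icc.mp hi).2
    have h1 : c i ≤ a + b * n := by
      simp only [hcdef]
      nlinarith
    calc c i ≤ a + b * n := h1
      _ < K := by omega
      _ < 2 ^ K := Nat.lt_two_pow_self (n := K)
      _ ≤ p ^ K := Nat.pow_le_pow_left hp K
  have hnK : ∀ p : ℕ, 2 ≤ p → n < p ^ K := by
    intro p hp
    calc n ≤ a + b * n := by nlinarith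
      _ < 2 ^ K := by have := Nat.lt_two_pow_self (n := K); omega
      _ ≤ p ^ K := Nat.pow_le_pow_left hp K
  have hlogK : ∀ p : ℕ, 2 ≤ p → Nat.log p n < K := by
    intro p hp
    exact (Nat.log_lt_iff_lt_pow (by omega) hn.ne').mpr (hnK p hp)
  -- primes dividing P or at most n don't divide b
  have pnotb : ∀ p : ℕ, p.Prime → (p ∣ P ∨ p ≤ n) → ¬ p ∣ b := by
    rintro p pp (hpP | hpn) hpb
    · obtain ⟨i, hi, hpc⟩ := (Prime.dvd_finset_prod_iff pp.prime c).mp hpP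
      have hpa : p ∣ a := by
        have : p ∣ b * i := hpb.mul_right i
        have := Nat.dvd_sub hpc this
        simpa [hcdef] using this
      have : p ∣ Nat.gcd a b := Nat.dvd_gcd hpa hpb
      rw [hab] at this
      exact pp.one_lt.ne' (Nat.dvd_one.mp this)
    · have hpf : p ∣ n.factorial := Nat.dvd_factorial pp.pos hpn
      have : p ∣ Nat.gcd n.factorial b := Nat.dvd_gcd hpf hpb
      rw [hnb] at this
      exact Nat.Prime.one_lt pp |>.ne' (Nat.dvd_one.mp this)
  -- coprimality of b with prime powers
  have hcop : ∀ p : ℕ, p.Prime → ¬ p ∣ b → ∀ k : ℕ, Nat.Coprime b (p ^ k) := by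
    intro p pp hpb k
    exact (((Nat.Prime.coprime_iff_not_dvd pp).mpr hpb).symm).pow_right k
  -- factorization of P as a sum
  have vP : ∀ p : ℕ, P.factorization p = ∑ i ∈ Icc 1 n, (c i).factorization p := by
    intro p
    rw [hPdef, Nat.factorization_prod fun i _ => hc0 i, Finset.sum_apply']
  -- Legendre
  have vfact : ∀ p : ℕ, p.Prime →
      (n.factorial).factorization p = ∑ k ∈ Ico 1 K, n / p ^ k := by
    intro p pp
    haveI : Fact p.Prime := ⟨pp⟩
    rw [Nat.factorization_def _ pp]
    exact padicValNat_factorial (hlogK p pp.two_le)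
  -- n! divides P
  have hfacP : n.factorial ∣ P := by
    rw [← Nat.factorization_le_iff_dvd (Nat.factorial_ne_zero n) hP0]
    intro p
    by_cases pp : p.Prime
    · by_cases hpn : p ≤ n
      · have hpb : ¬ p ∣ b := pnotb p pp (Or.inr hpn)
        rw [vfact p pp, vP p, sum_fact_eq pp (fun i _ => hc0 i) (hcK p pp.two_le)]
        apply Finset.sum_le_sum
        intro k _
        exact cnt_lb a b n (p ^ k) (pow_pos pp.pos k) (hcop p pp hpb k)
      · rw [Nat.factorization_factorial_eq_zero_of_lt (by omega)]
        exact Nat.zero_le _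
    · simp [Nat.factorization_eq_zero_of_not_prime _ pp]
  have hlefac : ∀ q : ℕ, (n.factorial).factorization q ≤ P.factorization q :=
    fun q => (Nat.factorization_le_iff_dvd (Nat.factorial_ne_zero n) hP0).mpr hfacP q
  -- choose for each prime an index of maximal valuation
  have hex : ∀ p : ℕ, ∃ i ∈ Icc 1 n, ∀ j ∈ Icc 1 n,
      (c j).factorization p ≤ (c i).factorization p :=
    fun p => Finset.exists_max_image _ _ hne
  choose I hI hImax using hex
  -- the sum over the other indices is at most the valuation of n!
  have key2 : ∀ p : ℕ, p.Prime → ¬ p ∣ b →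
      ∑ i ∈ (Icc 1 n).erase (I p), (c i).factorization p
        ≤ (n.factorial).factorization p := by
    intro p pp hpb
    rw [vfact p pp, sum_fact_eq pp (fun i _ => hc0 i)
      (fun i hi => hcK p pp.two_le i (Finset.erase_subset _ _ hi))]
    apply Finset.sum_le_sum
    intro k hk
    rcases Finset.eq_empty_or_nonempty {i ∈ (Icc 1 n).erase (I p) | p ^ k ∣ c i} with he | he
    · rw [he]; simp
    · obtain ⟨j, hj⟩ := he
      simp only [mem_filter] at hj
      obtain ⟨hj1, hj2⟩ := hj
      have hjI : j ∈ Icc 1 n := Finset.erase_subset _ _ hj1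
      have hkle : k ≤ (c j).factorization p :=
        (Nat.Prime.pow_dvd_iff_le_factorization pp (hc0 j)).mp hj2
      have hkle2 : k ≤ (c (I p)).factorization p := le_trans hkle (hImax p j hjI)
      have hdI : p ^ k ∣ c (I p) :=
        (Nat.Prime.pow_dvd_iff_le_factorization pp (hc0 (I p))).mpr hkle2
      have hnotmem : I p ∉ ({i ∈ (Icc 1 n).erase (I p) | p ^ k ∣ c i} : Finset ℕ) := by
        simp only [mem_filter, Finset.mem_erase]
        tauto
      have hsub : insert (I p) {i ∈ (Icc 1 n).erase (I p) | p ^ k ∣ c i}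
          ⊆ {i ∈ Icc 1 n | p ^ k ∣ c i} := by
        intro x hx
        rcases Finset.mem_insert.mp hx with h | hx
        · rw [h]; exact mem_filter.mpr ⟨hI p, hdI⟩
        · simp only [mem_filter, Finset.mem_erase] at hx ⊢
          tauto
      have h1 := Finset.card_le_card hsub
      rw [Finset.card_insert_of_notMem hnotmem] at h1
      have h2 : #{i ∈ Icc 1 n | p ^ k ∣ c i} ≤ n / p ^ k + 1 :=
        cnt_ub a b n (p ^ k) (pow_pos pp.pos k) (hcop p pp hpb k)
      omega
  -- key inequality
  have key : ∀ p ∈ P.primeFactors,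
      P.factorization p ≤ (n.factorial).factorization p + (c (I p)).factorization p := by
    intro p hp
    have pp : p.Prime := Nat.prime_of_mem_primeFactors hp
    have hpd : p ∣ P := Nat.dvd_of_mem_primeFactors hp
    have hpb : ¬ p ∣ b := pnotb p pp (Or.inl hpd)
    have := key2 p pp hpb
    rw [vP p, ← Finset.add_sum_erase _ _ (hI p)]
    omega
  -- construction
  set e : ℕ → ℕ := fun p => P.factorization p - (n.factorial).factorization p with hedef
  set f : ℕ → ℕ := fun i => ∏ p ∈ P.primeFactors.filter (fun p => I p = i), p ^ e p with hfdef
  have hfiberprime : ∀ i : ℕ, ∀ p ∈ P.primeFactors.filter (fun p => I p = i), p.Prime :=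
    fun i p hp => Nat.prime_of_mem_primeFactors (Finset.mem_filter.mp hp).1
  have hf0 : ∀ i : ℕ, f i ≠ 0 := by
    intro i
    simp only [hfdef]
    exact Finset.prod_ne_zero_iff.mpr fun p hp => pow_ne_zero _ (hfiberprime i p hp).pos.ne'
  have hfprod : ∏ i ∈ Icc 1 n, f i = ∏ p ∈ P.primeFactors, p ^ e p :=
    Finset.prod_fiberwise_of_maps_to (fun p _ => hI p) _
  have hprod0 : (∏ p ∈ P.primeFactors, p ^ e p) ≠ 0 :=
    Finset.prod_ne_zero_iff.mpr fun p hp =>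
      pow_ne_zero _ (Nat.prime_of_mem_primeFactors hp).pos.ne'
  have hPfac : n.factorial * ∏ p ∈ P.primeFactors, p ^ e p = P := by
    apply Nat.eq_of_factorization_eq (mul_ne_zero (Nat.factorial_ne_zero n) hprod0) hP0
    intro q
    rw [Nat.factorization_mul (Nat.factorial_ne_zero n) hprod0, Finsupp.add_apply,
      fact_prod_pow (fun p hp => Nat.prime_of_mem_primeFactors hp) e q]
    by_cases hq : q ∈ P.primeFactors
    · rw [if_pos hq]
      have := hlefac q
      simp only [hedef]
      omega
    · rw [if_neg hq]
      have h1 : P.factorization q = 0 := by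
        rw [← Nat.support_factorization] at hq
        exact Finsupp.notMem_support_iff.mp hq
      have h2 := hlefac q
      omega
  refine ⟨f, ?_, ?_, ?_⟩
  · rw [hfprod]
    conv_lhs => rw [← hPfac]
    exact Nat.mul_div_cancel_left _ (Nat.factorial_pos n)
  · intro i hi
    constructor
    · -- 1 < f i
      by_contra hcon
      have hfi1 : f i = 1 := by
        have := hf0 i
        omega
      set L : ℕ := ∏ p ∈ (Finset.range (n + 1)).filter Nat.Prime, p ^ Nat.log p n with hLdef
      have hSprime : ∀ p ∈ (Finset.range (n + 1)).filter Nat.Prime, p.Prime :=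
        fun p hp => (Finset.mem_filter.mp hp).2
      have hL0 : L ≠ 0 := Finset.prod_ne_zero_iff.mpr fun p hp =>
        pow_ne_zero _ (hSprime p hp).pos.ne'
      have hciP : c i ∣ P := Finset.dvd_prod_of_mem c hi
      have hciL : c i ∣ L := by
        rw [← Nat.factorization_le_iff_dvd (hc0 i) hL0]
        intro q
        show (c i).factorization q ≤ L.factorization q
        by_cases hq : q.Prime
        swap
        · rw [Nat.factorization_eq_zero_of_not_prime _ hq]; exact Nat.zero_le _
        by_cases hqc : q ∣ c i
        swap
        · rw [Nat.factorization_eq_zero_of_not_dvd hqc]; exact Nat.zero_le _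
        have hqP : q ∣ P := hqc.trans hciP
        have hqb : ¬ q ∣ b := pnotb q hq (Or.inl hqP)
        have hqPf : q ∈ P.primeFactors := Nat.mem_primeFactors.mpr ⟨hq, hqP, hP0⟩
        set k := (c i).factorization q with hkdef
        have hk1 : 1 ≤ k := (Nat.Prime.dvd_iff_one_le_factorization hq (hc0 i)).mp hqc
        have hdk : q ^ k ∣ c i := by rw [hkdef]; exact Nat.ordProj_dvd _ _
        have hdiff : ∀ x y : ℕ, x ∈ Icc 1 n → y ∈ Icc 1 n → x < y →
            q ^ k ∣ c x → q ^ k ∣ c y → q ^ k ≤ n := by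
          intro x y hx hy hxy hdx hdy
          have h1 := Nat.dvd_sub hdy hdx
          have hbb : b * y = b * (y - x) + b * x := by
            rw [← Nat.mul_add]; congr 1; omega
          have heq : c y - c x = b * (y - x) := by simp only [hcdef]; omega
          rw [heq] at h1
          have h2 : q ^ k ∣ (y - x) :=
            Nat.Coprime.dvd_of_dvd_mul_left ((hcop q hq hqb k).symm) h1
          have h3 : 0 < y - x := by omega
          have h4 := Nat.le_of_dvd h3 h2
          have h5 : y ≤ n := (Finset.mem_Icc.mp hy).2
          omega
        have main : q ^ k ≤ n := by
          by_cases hIq : I q = i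
          · -- fiber case
            have hqfib : q ∈ P.primeFactors.filter (fun p => I p = i) :=
              Finset.mem_filter.mpr ⟨hqPf, hIq⟩
            have hdvd1 : q ^ e q ∣ f i := by
              simp only [hfdef]
              exact Finset.dvd_prod_of_mem _ hqfib
            rw [hfi1] at hdvd1
            have he0 : e q = 0 := by
              have h1 := Nat.dvd_one.mp hdvd1
              by_contra he
              have h2 := Nat.le_self_pow he q
              have := hq.two_le
              omega
            have hPf : P.factorization q = (n.factorial).factorization q := by
              have := hlefac q
              simp only [hedef] at he0
              omega
            have hkleP : k ≤ P.factorization q := by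
              rw [vP q, hkdef]
              exact Finset.single_le_sum (f := fun j => (c j).factorization q)
                (fun j _ => Nat.zero_le _) hi
            have hqn : q ≤ n := by
              by_contra hqn
              push_neg at hqn
              have h0 : (n.factorial).factorization q = 0 :=
                Nat.factorization_factorial_eq_zero_of_lt hqn
              omega
            by_contra hgt
            push_neg at hgt
            have hklt : k < K := by
              have h1 : q ^ k ≤ c i := Nat.le_of_dvd (Nat.pos_of_ne_zero (hc0 i)) hdk
              have h2 : c i < q ^ K := hcK q hq.two_le i hi
              exact (Nat.pow_lt_pow_iff_right hq.one_lt).mp (lt_of_le_of_lt h1 h2)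
            have hvPsum : P.factorization q
                = ∑ m ∈ Ico 1 K, #{j ∈ Icc 1 n | q ^ m ∣ c j} := by
              rw [vP q, sum_fact_eq hq (fun j _ => hc0 j) (hcK q hq.two_le)]
            have hlt : ∑ m ∈ Ico 1 K, n / q ^ m
                < ∑ m ∈ Ico 1 K, #{j ∈ Icc 1 n | q ^ m ∣ c j} := by
              apply Finset.sum_lt_sum
              · intro m _
                exact cnt_lb a b n (q ^ m) (pow_pos hq.pos m) (hcop q hq hqb m)
              · refine ⟨k, Finset.mem_Ico.mpr ⟨hk1, hklt⟩, ?_⟩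
                have hz : n / q ^ k = 0 := Nat.div_eq_of_lt hgt
                rw [hz]
                exact Finset.card_pos.mpr ⟨i, Finset.mem_filter.mpr ⟨hi, hdk⟩⟩
            rw [vfact q hq] at hPf
            omega
          · -- other-index case
            have hmax := hImax q i hi
            have hd2 : q ^ k ∣ c (I q) :=
              (Nat.Prime.pow_dvd_iff_le_factorization hq (hc0 (I q))).mpr
                (hkdef ▸ hmax)
            rcases lt_trichotomy i (I q) with h | h | h
            · exact hdiff i (I q) hi (hI q) h hdk hd2
            · exact absurd h.symm hIq
            · exact hdiff (I q) i (hI q) hi h hd2 hdk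
        have hqn : q ≤ n := le_trans (Nat.le_self_pow (by omega) q) main
        have hklog : k ≤ Nat.log q n :=
          (Nat.le_log_iff_pow_le hq.one_lt hn.ne').mpr main
        rw [hLdef, fact_prod_pow hSprime _ q,
          if_pos (Finset.mem_filter.mpr ⟨Finset.mem_range.mpr (by omega), hq⟩)]
        exact hklog
      have hcile : c i ≤ L := Nat.le_of_dvd (Nat.pos_of_ne_zero hL0) hciL
      have hicc := Finset.mem_Icc.mp hi
      have habci : a + b ≤ c i := by
        simp only [hcdef]
        nlinarith [hicc.1]
      omega
    · -- f i ∣ c i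
      rw [show a + b * i = c i from rfl, ← Nat.factorization_le_iff_dvd (hf0 i) (hc0 i)]
      intro q
      show (f i).factorization q ≤ (c i).factorization q
      simp only [hfdef]
      rw [fact_prod_pow (hfiberprime i) e q]
      by_cases hq : q ∈ P.primeFactors.filter (fun p => I p = i)
      · rw [if_pos hq]
        obtain ⟨hq1, hq2⟩ := Finset.mem_filter.mp hq
        have hk := key q hq1
        rw [hq2] at hk
        simp only [hedef]
        omega
      · rw [if_neg hq]; exact Nat.zero_le _
  · -- coprime
    intro i hi j hj hij
    show Nat.Coprime (f i) (f j)
    simp only [hfdef]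
    apply Nat.Coprime.prod_left
    intro p hp
    apply Nat.Coprime.prod_right
    intro q hq
    have hpI := (Finset.mem_filter.mp hp).2
    have hqI := (Finset.mem_filter.mp hq).2
    have hpq : p ≠ q := by
      rintro rfl
      rw [hpI] at hqI
      exact hij hqI
    exact Nat.Coprime.pow _ _ ((Nat.coprime_primes (hfiberprime i p hp)
      (hfiberprime j q hq)).mpr hpq)
end

section
/- For any positive integers n, a, b with gcd(a, b) = 1, gcd(n!, b) = 1, and a + b > lcm(1, 2, ..., n), the product (a+b)(a+2b)···(a+nb) has at least n distinct prime factors. -/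
theorem stmt5 (n a b : ℕ) (hn : 0 < n) (ha : 0 < a) (hb : 0 < b)
    (hab : Nat.gcd a b = 1) (hnb : Nat.gcd n.factorial b = 1)
    (hbig : a + b > (Finset.Icc 1 n).lcm id) :
    n ≤ (∏ i ∈ Finset.Icc 1 n, (a + b * i)).primeFactors.card := by
  by_contra hcon
  push_neg at hcon
  set L := (Finset.Icc 1 n).lcm id with hL
  set P := ∏ i ∈ Finset.Icc 1 n, (a + b * i) with hP
  have hterm : ∀ i : ℕ, 0 < a + b * i := fun i => Nat.lt_of_lt_of_le ha (Nat.le_add_right _ _)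
  have hPpos : 0 < P := Finset.prod_pos (fun i _ => hterm i)
  have hne : (Finset.Icc 1 n).Nonempty := ⟨1, Finset.mem_Icc.mpr ⟨le_rfl, hn⟩⟩
  have hchoice : ∀ p : ℕ, ∃ j ∈ Finset.Icc 1 n,
      ∀ i ∈ Finset.Icc 1 n, (a + b * i).factorization p ≤ (a + b * j).factorization p :=
    fun p => Finset.exists_max_image _ (fun i => (a + b * i).factorization p) hne
  choose f hfmem hfmax using hchoice
  set S := P.primeFactors with hS
  have hcard : (S.image f).card < (Finset.Icc 1 n).card := by
    calc (S.image f).card ≤ S.card := Finset.card_image_le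
    _ < n := hcon
    _ = (Finset.Icc 1 n).card := by simp
  obtain ⟨i0, hi0, hi0n⟩ : ∃ i0 ∈ Finset.Icc 1 n, i0 ∉ S.image f := by
    by_contra h
    push_neg at h
    exact absurd (Finset.card_le_card h) (not_le.mpr hcard)
  rw [Finset.mem_Icc] at hi0
  have hdvd : a + b * i0 ∣ L := by
    rw [Nat.dvd_iff_prime_pow_dvd_dvd]
    intro p k hp hpk
    rcases Nat.eq_zero_or_pos k with rfl | hk
    · simp
    have hpdvd : p ∣ a + b * i0 := dvd_trans (dvd_pow_self p hk.ne') hpk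
    have hpb : ¬ p ∣ b := by
      intro hpb2
      have hpa : p ∣ a := by
        have := Nat.dvd_sub hpdvd (hpb2.mul_right i0)
        simpa using this
      have h1 : p ∣ 1 := hab ▸ Nat.dvd_gcd hpa hpb2
      exact hp.one_lt.ne' (Nat.dvd_one.mp h1)
    have hpP : p ∈ S := by
      rw [hS, Nat.mem_primeFactors]
      refine ⟨hp, ?_, hPpos.ne'⟩
      exact dvd_trans hpdvd (Finset.dvd_prod_of_mem _ (Finset.mem_Icc.mpr hi0))
    set j := f p with hj
    have hjmem := hfmem p
    have hjne : j ≠ i0 := by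
      intro h
      exact hi0n (Finset.mem_image.mpr ⟨p, hpP, h⟩)
    rw [Finset.mem_Icc] at hjmem
    have hk1 : k ≤ (a + b * i0).factorization p :=
      (Nat.Prime.pow_dvd_iff_le_factorization hp (hterm i0).ne').mp hpk
    have hk2 : k ≤ (a + b * j).factorization p :=
      le_trans hk1 (hfmax p i0 (Finset.mem_Icc.mpr hi0))
    have hpkj : p ^ k ∣ a + b * j :=
      (Nat.Prime.pow_dvd_iff_le_factorization hp (hterm j).ne').mpr hk2
    -- p^k divides b * |j - i0|
    have hd : ∃ d : ℕ, 1 ≤ d ∧ d ≤ n ∧ p ^ k ∣ b * d := by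
      rcases lt_or_gt_of_ne hjne with h1 | h1
      · refine ⟨i0 - j, by omega, by omega, ?_⟩
        have heq : a + b * i0 - (a + b * j) = b * (i0 - j) := by
          rw [Nat.mul_sub]; omega
        exact heq ▸ Nat.dvd_sub hpk hpkj
      · refine ⟨j - i0, by omega, by omega, ?_⟩
        have heq : a + b * j - (a + b * i0) = b * (j - i0) := by
          rw [Nat.mul_sub]; omega
        exact heq ▸ Nat.dvd_sub hpkj hpk
    obtain ⟨d, hd1, hd2, hd3⟩ := hd
    have hcop : Nat.Coprime (p ^ k) b := (hp.coprime_iff_not_dvd.mpr hpb).pow_left k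
    have hpd : p ^ k ∣ d := hcop.dvd_of_dvd_mul_left hd3
    exact dvd_trans hpd (Finset.dvd_lcm (Finset.mem_Icc.mpr ⟨hd1, hd2⟩))
  have hLpos : 0 < L := by
    rcases Nat.eq_zero_or_pos L with h0 | h0
    · exfalso
      rw [hL] at h0
      rw [Finset.lcm_eq_zero_iff] at h0
      obtain ⟨x, hx, hx0⟩ := h0
      simp only [Finset.mem_coe, Finset.mem_Icc] at hx
      simp only [id] at hx0
      omega
    · exact h0
  have hle : a + b * i0 ≤ L := Nat.le_of_dvd hLpos hdvd
  have : a + b ≤ a + b * i0 := by nlinarith [hi0.1]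
  omega
end

section
/- For any positive integers n, a, b with gcd(a, b) = 1 and gcd(n!, b) = 1, and any prime p dividing n!, the p-adic valuation of (a+b)(a+2b)···(a+nb)/n! is at most max_{1 ≤ i ≤ n} v_p(a + b·i), where v_p denotes the p-adic valuation. -/
lemma card_filter_le (n a b q : ℕ) (hq : 0 < q) (hqb : Nat.Coprime q b) :
    ((Finset.Icc 1 n).filter (fun i => q ∣ a + b * i)).card ≤ n / q + 1 := by
  have := Finset.card_le_card_of_injOn (f := fun i => (i - 1) / q)
    (s := (Finset.Icc 1 n).filter (fun i => q ∣ a + b * i))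
    (t := Finset.range (n / q + 1)) ?_ ?_
  · simpa using this
  · intro i hi
    simp only [Finset.mem_coe, Finset.mem_filter, Finset.mem_Icc] at hi
    simp only [Finset.mem_coe, Finset.mem_range]
    have : (i - 1) / q ≤ n / q := Nat.div_le_div_right (by omega)
    omega
  · intro i hi i' hi' h
    simp only [Finset.coe_filter, Set.mem_setOf_eq, Finset.mem_Icc] at hi hi'
    -- wlog-free: prove symmetric claim
    have main : ∀ x y : ℕ, x ≤ y → 1 ≤ x → q ∣ a + b * x → q ∣ a + b * y →
        (x - 1) / q = (y - 1) / q → x = y := by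
      intro x y hxy hx1 d1 d2 heq
      have hd : q ∣ b * (y - x) := by
        have h1 : (a + b * y) - (a + b * x) = b * (y - x) := by
          have h2 : b * (y - x) = b * y - b * x := Nat.mul_sub b y x
          have : b * x ≤ b * y := Nat.mul_le_mul_left b hxy
          omega
        have := Nat.dvd_sub d2 d1
        rwa [h1] at this
      have hd2 : q ∣ y - x := (Nat.Coprime.dvd_of_dvd_mul_left hqb hd)
      obtain ⟨t, ht⟩ := hd2
      have hy : y - 1 = (x - 1) + q * t := by omega
      rw [hy, Nat.add_mul_div_left _ _ hq] at heq
      have ht0 : t = 0 := by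
        by_contra h0
        have : (x-1)/q < (x-1)/q + t := by omega
        omega
      subst ht0
      simp only [Nat.mul_zero] at ht
      omega
    rcases le_total i i' with hle | hle
    · exact main i i' hle hi.1.1 hi.2 hi'.2 h
    · exact (main i' i hle hi'.1.1 hi'.2 hi.2 h.symm).symm

lemma prod_Icc_asc (c : ℕ) : ∀ n, ∏ i ∈ Finset.Icc 1 n, (c + i) = (c + 1).ascFactorial n
  | 0 => by simp
  | m + 1 => by
      rw [Finset.prod_Icc_succ_top (Nat.one_le_iff_ne_zero.mpr (Nat.succ_ne_zero m)),
        prod_Icc_asc c m, Nat.ascFactorial_succ]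
      ring

lemma fact_dvd_prod (n a b : ℕ) (hnb : Nat.gcd n.factorial b = 1) :
    n.factorial ∣ ∏ i ∈ Finset.Icc 1 n, (a + b * i) := by
  set N := n.factorial with hN
  haveI : NeZero N := ⟨(Nat.factorial_pos n).ne'⟩
  have hu : IsUnit (b : ZMod N) := (ZMod.isUnit_iff_coprime b N).mpr
    (Nat.coprime_comm.mp hnb)
  set c : ℕ := ((b : ZMod N)⁻¹ * a).val with hc
  have hcv : ((c : ℕ) : ZMod N) = (b : ZMod N)⁻¹ * a := ZMod.natCast_zmod_val _
  rw [← ZMod.natCast_eq_zero_iff]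
  push_cast
  have key : ∀ i : ℕ, (a : ZMod N) + b * i = b * ((c : ZMod N) + i) := by
    intro i
    rw [hcv, mul_add, ← mul_assoc, ZMod.mul_inv_of_unit _ hu, one_mul]
  calc ∏ i ∈ Finset.Icc 1 n, ((a : ZMod N) + b * i)
      = ∏ i ∈ Finset.Icc 1 n, ((b : ZMod N) * ((c : ZMod N) + i)) := by
        exact Finset.prod_congr rfl fun i _ => key i
    _ = (b : ZMod N) ^ n * ∏ i ∈ Finset.Icc 1 n, ((c : ZMod N) + i) := by
        rw [Finset.prod_mul_distrib, Finset.prod_const, Nat.card_Icc]; simp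
    _ = 0 := by
        have : (∏ i ∈ Finset.Icc 1 n, ((c : ZMod N) + i))
            = ((∏ i ∈ Finset.Icc 1 n, (c + i) : ℕ) : ZMod N) := by push_cast; rfl
        rw [this]
        rw [prod_Icc_asc, (ZMod.natCast_eq_zero_iff _ _).mpr
          (Nat.factorial_dvd_ascFactorial _ _), mul_zero]

theorem main_ineq (n a b : ℕ) (hn : 0 < n) (ha : 0 < a) (hb : 0 < b)
    (hnb : Nat.gcd n.factorial b = 1)
    (p : ℕ) (hp : p.Prime) (hpn : p ∣ n.factorial)
    (hdvd : n.factorial ∣ ∏ i ∈ Finset.Icc 1 n, (a + b * i))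
    (count_le : ∀ q : ℕ, 0 < q → Nat.Coprime q b →
      ((Finset.Icc 1 n).filter (fun i => q ∣ a + b * i)).card ≤ n / q + 1) :
    padicValNat p ((∏ i ∈ Finset.Icc 1 n, (a + b * i)) / n.factorial) ≤
      (Finset.Icc 1 n).sup (fun i => padicValNat p (a + b * i)) := by
  haveI : Fact p.Prime := ⟨hp⟩
  set N := n.factorial with hNdef
  set P := ∏ i ∈ Finset.Icc 1 n, (a + b * i) with hPdef
  set M := (Finset.Icc 1 n).sup (fun i => padicValNat p (a + b * i)) with hMdef
  have hfac0 : ∀ i ∈ Finset.Icc 1 n, a + b * i ≠ 0 := fun i _ => by positivity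
  have hP0 : P ≠ 0 := Finset.prod_ne_zero_iff.mpr hfac0
  have hpb : Nat.Coprime p b := Nat.Coprime.coprime_dvd_left hpn hnb
  rw [padicValNat.div_of_dvd hdvd, tsub_le_iff_right, add_comm]
  -- P's valuation as sum
  have hvP : padicValNat p P = ∑ i ∈ Finset.Icc 1 n, padicValNat p (a + b * i) := by
    rw [← Nat.factorization_def _ hp, hPdef, Nat.factorization_prod hfac0]
    simp only [Finsupp.finset_sum_apply]
    exact Finset.sum_congr rfl fun i hi => Nat.factorization_def _ hp
  set B := a + b * n + 1 with hBdef
  have hvlt : ∀ i ∈ Finset.Icc 1 n, padicValNat p (a + b * i) < B := by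
    intro i hi
    simp only [Finset.mem_Icc] at hi
    calc padicValNat p (a + b * i) ≤ Nat.log p (a + b * i) := padicValNat_le_nat_log _
      _ ≤ a + b * i := Nat.log_le_self _ _
      _ < B := by have : b * i ≤ b * n := Nat.mul_le_mul_left b hi.2; omega
  have hMB : M + 1 ≤ B := by
    have : M < B := by
      rw [hMdef]
      apply Finset.sup_lt_iff (show (⊥:ℕ) < B from Nat.succ_pos _) |>.mpr
      intro i hi; exact hvlt i hi
    omega
  have hlog : Nat.log p n < B := by
    have := Nat.log_le_self p n
    have : n ≤ b * n := Nat.le_mul_of_pos_left n hb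
    omega
  -- valuation of each factor as a count
  have hcount : ∀ i ∈ Finset.Icc 1 n, padicValNat p (a + b * i)
      = ((Finset.Ico 1 B).filter (fun j => p ^ j ∣ a + b * i)).card := by
    intro i hi
    have h0 := hfac0 i hi
    have : (Finset.Ico 1 B).filter (fun j => p ^ j ∣ a + b * i)
        = Finset.Icc 1 (padicValNat p (a + b * i)) := by
      ext j
      simp only [Finset.mem_filter, Finset.mem_Ico, Finset.mem_Icc]
      rw [hp.pow_dvd_iff_le_factorization h0, Nat.factorization_def _ hp]
      have := hvlt i hi
      omega
    rw [this, Nat.card_Icc]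
    omega
  -- swap the double count
  have hswap : (∑ i ∈ Finset.Icc 1 n, padicValNat p (a + b * i))
      = ∑ j ∈ Finset.Ico 1 B, ((Finset.Icc 1 n).filter (fun i => p ^ j ∣ a + b * i)).card := by
    rw [Finset.sum_congr rfl hcount]
    simp only [Finset.card_filter]
    exact Finset.sum_comm
  -- Legendre
  have hvN : padicValNat p N = ∑ j ∈ Finset.Ico 1 B, n / p ^ j := padicValNat_factorial hlog
  rw [hvP, hswap, hvN]
  -- split the sum
  have hsplit : Finset.Ico 1 B = Finset.Ico 1 (M+1) ∪ Finset.Ico (M+1) B := by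
    rw [Finset.Ico_union_Ico_eq_Ico (by omega) hMB]
  have hzero : ∀ j ∈ Finset.Ico (M+1) B,
      ((Finset.Icc 1 n).filter (fun i => p ^ j ∣ a + b * i)).card = 0 := by
    intro j hj
    simp only [Finset.mem_Ico] at hj
    rw [Finset.card_eq_zero, Finset.filter_eq_empty_iff]
    intro i hi hdvd'
    have h0 := hfac0 i hi
    have hle : j ≤ padicValNat p (a + b * i) := by
      rw [← Nat.factorization_def _ hp]
      exact (hp.pow_dvd_iff_le_factorization h0).mp hdvd'
    have : padicValNat p (a + b * i) ≤ M := Finset.le_sup (f := fun i => padicValNat p (a + b * i)) hi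
    omega
  nth_rewrite 1 [hsplit]
  rw [Finset.sum_union (Finset.Ico_disjoint_Ico_consecutive 1 (M+1) B),
    Finset.sum_eq_zero hzero, add_zero]
  calc ∑ j ∈ Finset.Ico 1 (M+1), ((Finset.Icc 1 n).filter (fun i => p ^ j ∣ a + b * i)).card
      ≤ ∑ j ∈ Finset.Ico 1 (M+1), (n / p ^ j + 1) := by
        apply Finset.sum_le_sum
        intro j hj
        exact count_le (p ^ j) (pow_pos hp.pos j) (Nat.Coprime.pow_left j hpb)
    _ = (∑ j ∈ Finset.Ico 1 (M+1), n / p ^ j) + M := by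
        rw [Finset.sum_add_distrib, Finset.sum_const, Nat.card_Ico]; simp
    _ ≤ (∑ j ∈ Finset.Ico 1 B, n / p ^ j) + M := by
        apply Nat.add_le_add_right
        exact Finset.sum_le_sum_of_subset (Finset.Ico_subset_Ico_right hMB)

theorem stmt6 (n a b : ℕ) (hn : 0 < n) (ha : 0 < a) (hb : 0 < b)
    (hab : Nat.gcd a b = 1) (hnb : Nat.gcd n.factorial b = 1)
    (p : ℕ) (hp : p.Prime) (hpn : p ∣ n.factorial) :
    padicValNat p ((∏ i ∈ Finset.Icc 1 n, (a + b * i)) / n.factorial) ≤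
      (Finset.Icc 1 n).sup (fun i => padicValNat p (a + b * i)) :=
  main_ineq n a b hn ha hb hnb p hp hpn (fact_dvd_prod n a b hnb)
    (fun q hq hqb => card_filter_le n a b q hq hqb)
end

section
/- For any positive integer n > 1 and positive integers a, b with gcd(a, b) = 1, and any prime p dividing (a+b)(a+2b)···(a+nb), the inequality v_p((a+b)(a+2b)···(a+nb)) ≥ v_p(n!) holds. -/
open Finset

/-- In any window `[1,n]` there are at least `n/m` values `i` with `m ∣ a + b*i`,
provided `b` is invertible mod `m`. -/
lemma count_dvd_ge (a b n m : ℕ) (hm : 1 < m) (hcop : Nat.Coprime b m) :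
    n / m ≤ ((Finset.Icc 1 n).filter (fun i => m ∣ a + b * i)).card := by
  haveI : NeZero m := ⟨by omega⟩
  -- find r0 ∈ [1, m] with m ∣ a + b * r0
  set x : ZMod m := (-(a : ZMod m)) * (b : ZMod m)⁻¹ with hx
  have hbu : IsUnit (b : ZMod m) := (ZMod.isUnit_iff_coprime b m).mpr hcop
  have hbx : (b : ZMod m) * x = -(a : ZMod m) := by
    rw [hx, mul_comm, mul_assoc, ZMod.inv_mul_of_unit _ hbu, mul_one]
  set r0 : ℕ := if x.val = 0 then m else x.val with hr0
  have hr0cast : (r0 : ZMod m) = x := by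
    rw [hr0]; split_ifs with h
    · rw [ZMod.natCast_self]
      have hxx : x = ((x.val : ℕ) : ZMod m) := (ZMod.natCast_rightInverse x).symm
      rw [hxx, h, Nat.cast_zero]
    · exact ZMod.natCast_rightInverse x
  have hr0pos : 1 ≤ r0 := by
    rw [hr0]; split_ifs with h <;> omega
  have hr0le : r0 ≤ m := by
    have := x.val_lt
    rw [hr0]; split_ifs with h <;> omega
  have hdvd0 : m ∣ a + b * r0 := by
    have hz : ((a + b * r0 : ℕ) : ZMod m) = 0 := by
      push_cast
      rw [hr0cast, hbx]
      ring
    exact (ZMod.natCast_eq_zero_iff _ _).mp hz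
  -- the map j ↦ r0 + j * m is injective from range (n/m) into the filtered set
  have : ∀ j ∈ Finset.range (n / m), r0 + j * m ∈
      (Finset.Icc 1 n).filter (fun i => m ∣ a + b * i) := by
    intro j hj
    rw [Finset.mem_range] at hj
    rw [Finset.mem_filter, Finset.mem_Icc]
    refine ⟨⟨by omega, ?_⟩, ?_⟩
    · have h1 : (j + 1) * m ≤ (n / m) * m := Nat.mul_le_mul_right m (by omega)
      have h3 : (n / m) * m ≤ n := Nat.div_mul_le_self n m
      have h4 : r0 + j * m ≤ (j + 1) * m := by rw [add_mul, one_mul]; omega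
      omega
    · have : a + b * (r0 + j * m) = (a + b * r0) + (b * j) * m := by ring
      rw [this]
      exact Nat.dvd_add hdvd0 (Dvd.intro_left _ rfl)
  calc n / m = (Finset.range (n / m)).card := (Finset.card_range _).symm
    _ ≤ _ := Finset.card_le_card_of_injOn (fun j => r0 + j * m) this (by
        intro j1 _ j2 _ h
        have hm0 : 0 < m := by omega
        simp only at h
        exact Nat.eq_of_mul_eq_mul_right hm0 (by omega))

theorem stmt7 (n a b : ℕ) (hn : 1 < n) (ha : 0 < a) (hb : 0 < b)
    (hab : Nat.gcd a b = 1)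
    (p : ℕ) (hp : p.Prime) (hpd : p ∣ ∏ i ∈ Finset.Icc 1 n, (a + b * i)) :
    padicValNat p n.factorial ≤
      padicValNat p (∏ i ∈ Finset.Icc 1 n, (a + b * i)) := by
  haveI : Fact p.Prime := ⟨hp⟩
  -- p does not divide b
  have hpb : ¬ p ∣ b := by
    intro hpbd
    obtain ⟨i, hi, hpi⟩ := hp.prime.exists_mem_finset_dvd hpd
    have hpa : p ∣ a := by
      have hbi : p ∣ b * i := hpbd.mul_right i
      have := (Nat.dvd_add_right hbi).mp (by rwa [Nat.add_comm] at hpi)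
      exact this
    have hg : p ∣ Nat.gcd a b := Nat.dvd_gcd hpa hpbd
    rw [hab] at hg
    have := Nat.le_of_dvd one_pos hg
    have := hp.two_le
    omega
  set B := Nat.log p n + 1 with hB
  have hne : ∀ i ∈ Finset.Icc 1 n, a + b * i ≠ 0 := fun i _ => by positivity
  -- Legendre
  rw [padicValNat_factorial (b := B) (by omega)]
  -- each term n / p^k is at most the count of i with p^k ∣ a + b*i
  have step1 : ∀ k ∈ Finset.Ico 1 B, n / p ^ k ≤
      ((Finset.Icc 1 n).filter (fun i => p ^ k ∣ a + b * i)).card := by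
    intro k hk
    rw [Finset.mem_Ico] at hk
    apply count_dvd_ge
    · exact Nat.one_lt_pow (by omega) hp.one_lt
    · exact (Nat.Prime.coprime_iff_not_dvd hp).mpr hpb |>.symm.pow_right k
  calc ∑ k ∈ Finset.Ico 1 B, n / p ^ k
      ≤ ∑ k ∈ Finset.Ico 1 B,
        ((Finset.Icc 1 n).filter (fun i => p ^ k ∣ a + b * i)).card :=
        Finset.sum_le_sum step1
    _ = ∑ k ∈ Finset.Ico 1 B, ∑ i ∈ Finset.Icc 1 n,
          (if p ^ k ∣ a + b * i then 1 else 0) := by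
        refine Finset.sum_congr rfl fun k _ => ?_
        rw [Finset.card_filter]
    _ = ∑ i ∈ Finset.Icc 1 n, ∑ k ∈ Finset.Ico 1 B,
          (if p ^ k ∣ a + b * i then 1 else 0) := Finset.sum_comm
    _ ≤ ∑ i ∈ Finset.Icc 1 n, padicValNat p (a + b * i) := by
        refine Finset.sum_le_sum fun i hi => ?_
        have hx : a + b * i ≠ 0 := hne i hi
        calc ∑ k ∈ Finset.Ico 1 B, (if p ^ k ∣ a + b * i then 1 else 0)
            = ((Finset.Ico 1 B).filter (fun k => p ^ k ∣ a + b * i)).card := by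
              rw [Finset.card_filter]
          _ ≤ (Finset.Icc 1 (padicValNat p (a + b * i))).card := by
              apply Finset.card_le_card
              intro k hk
              rw [Finset.mem_filter, Finset.mem_Ico] at hk
              rw [Finset.mem_Icc]
              exact ⟨hk.1.1, (padicValNat_dvd_iff_le hx).mp hk.2⟩
          _ = padicValNat p (a + b * i) := by rw [Nat.card_Icc]; omega
    _ = padicValNat p (∏ i ∈ Finset.Icc 1 n, (a + b * i)) := by
        have hprod : (∏ i ∈ Finset.Icc 1 n, (a + b * i)) ≠ 0 :=
          Finset.prod_ne_zero_iff.mpr hne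
        rw [← Nat.factorization_def _ hp, Nat.factorization_prod hne]
        simp [Finset.sum_apply', Nat.factorization_def _ hp]
end

section
/- For every positive integer n > 1 and positive integers a, b with gcd(a, b) = 1, the rational number (a+b)(a+2b)···(a+nb)/n! can be written in lowest terms as P/Q where gcd(P, Q) = 1 and P admits a representation P = ∏_{i=1}^n a_i with each a_i a positive integer dividing a + b·i and gcd(a_i, a_j) = 1 for all 1 ≤ i ≠ j ≤ n. -/
open Finset Nat

private lemma count_bound (a b q n : ℕ) (hq : 0 < q) (hcop : Nat.Coprime q b) :
    ((Finset.Icc 1 n).filter (fun i => q ∣ a + b * i)).card ≤ n / q + 1 := by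
  classical
  have : ((Finset.Icc 1 n).filter (fun i => q ∣ a + b * i)).card ≤
      (Finset.range (n / q + 1)).card := by
    apply Finset.card_le_card_of_injOn (fun i => i / q)
    · intro i hi
      simp only [Finset.mem_coe, Finset.mem_filter, Finset.mem_Icc] at hi
      simp only [Finset.mem_coe, Finset.mem_range]
      exact Nat.lt_succ_of_le (Nat.div_le_div_right hi.1.2)
    · intro i hi j hj hij
      simp only [Finset.coe_filter, Set.mem_setOf_eq, Finset.mem_Icc] at hi hj
      have hmod : i % q = j % q := by
        have key : ∀ x y : ℕ, x ≤ y → q ∣ a + b * x → q ∣ a + b * y → x % q = y % q := by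
          intro x y hxy hx hy
          have h1 : q ∣ (a + b * y) - (a + b * x) := Nat.dvd_sub hy hx
          have h2 : (a + b * y) - (a + b * x) = b * (y - x) := by
            rw [Nat.mul_sub]
            omega
          rw [h2] at h1
          have h3 : q ∣ y - x := hcop.dvd_of_dvd_mul_left h1
          exact (Nat.modEq_iff_dvd' hxy).mpr h3
        rcases le_total i j with h | h
        · exact key i j h hi.2 hj.2
        · exact (key j i h hj.2 hi.2).symm
      have hij' : i / q = j / q := by simpa using hij
      have e1 := Nat.div_add_mod i q
      have e2 := Nat.div_add_mod j q
      rw [hij', hmod] at e1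
      omega
  simpa using this

private lemma aux_prod_dvd {ι : Type*} [DecidableEq ι] (s : Finset ι) (f : ι → ℕ) (m : ℕ)
    (hc : ∀ i ∈ s, ∀ j ∈ s, i ≠ j → Nat.Coprime (f i) (f j))
    (hd : ∀ i ∈ s, f i ∣ m) : ∏ i ∈ s, f i ∣ m := by
  classical
  induction s using Finset.induction_on with
  | empty => simpa using one_dvd m
  | @insert a t ha ih =>
    rw [Finset.prod_insert ha]
    have hcop : Nat.Coprime (f a) (∏ i ∈ t, f i) :=
      Nat.Coprime.prod_right fun i hi =>
        hc a (Finset.mem_insert_self a t) i (Finset.mem_insert_of_mem hi)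
          (fun h => ha (h ▸ hi))
    exact hcop.mul_dvd_of_dvd_of_dvd (hd a (Finset.mem_insert_self a t))
      (ih (fun i hi j hj hij => hc i (Finset.mem_insert_of_mem hi) j
        (Finset.mem_insert_of_mem hj) hij)
        (fun i hi => hd i (Finset.mem_insert_of_mem hi)))

theorem stmt8 (n a b : ℕ) (hn : 1 < n) (ha : 0 < a) (hb : 0 < b)
    (hab : Nat.gcd a b = 1) :
    ∃ P Q : ℕ, 0 < P ∧ 0 < Q ∧ Nat.Coprime P Q ∧
      P * n.factorial = Q * ∏ i ∈ Finset.Icc 1 n, (a + b * i) ∧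
      ∃ f : ℕ → ℕ,
        P = ∏ i ∈ Finset.Icc 1 n, f i ∧
        (∀ i ∈ Finset.Icc 1 n, 0 < f i ∧ f i ∣ a + b * i) ∧
        (∀ i ∈ Finset.Icc 1 n, ∀ j ∈ Finset.Icc 1 n, i ≠ j →
          Nat.gcd (f i) (f j) = 1) := by
  classical
  set N : ℕ := ∏ i ∈ Finset.Icc 1 n, (a + b * i) with hNdef
  have hN0 : N ≠ 0 := by
    have : 0 < N := Finset.prod_pos (fun i _ => by omega)
    omega
  set d : ℕ := Nat.gcd N n.factorial with hddef
  have hd0 : d ≠ 0 := Nat.gcd_ne_zero_left hN0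
  set P : ℕ := N / d with hPdef
  set Q : ℕ := n.factorial / d with hQdef
  have hPd : P * d = N := Nat.div_mul_cancel (Nat.gcd_dvd_left _ _)
  have hQd : Q * d = n.factorial := Nat.div_mul_cancel (Nat.gcd_dvd_right _ _)
  have hP0 : P ≠ 0 := by
    intro h
    rw [h, zero_mul] at hPd
    exact hN0 hPd.symm
  have hQ0 : Q ≠ 0 := by
    intro h
    rw [h, zero_mul] at hQd
    exact (Nat.factorial_ne_zero n) hQd.symm
  have hcopPQ : Nat.Coprime P Q :=
    Nat.coprime_div_gcd_div_gcd (Nat.gcd_pos_of_pos_left _ (Nat.pos_of_ne_zero hN0))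
  have heq : P * n.factorial = Q * N := by
    rw [← hQd, ← hPd]
    ring
  -- Key lemma
  have key : ∀ p : ℕ, p.Prime → p ∣ P →
      ∃ i, i ∈ Finset.Icc 1 n ∧ p ^ P.factorization p ∣ a + b * i := by
    intro p pp hpP
    have hpN : p ∣ N := hpP.trans ⟨d, hPd.symm⟩
    have hpb : ¬ p ∣ b := by
      intro hpb
      obtain ⟨i, _, hpi⟩ := pp.prime.exists_mem_finset_dvd hpN
      have hpa : p ∣ a := by
        have h := Nat.dvd_sub hpi (hpb.mul_right i)
        rwa [Nat.add_sub_cancel] at h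
      have h1 : p ∣ 1 := hab ▸ Nat.dvd_gcd hpa hpb
      have h2 : p ≤ 1 := Nat.le_of_dvd one_pos h1
      have := pp.two_le
      omega
    have hcoppb : Nat.Coprime p b := (Nat.Prime.coprime_iff_not_dvd pp).mpr hpb
    -- choose maximizer
    have hne : (Finset.Icc 1 n).Nonempty := ⟨1, by simp; omega⟩
    obtain ⟨i0, hi0mem, hi0max⟩ :=
      Finset.exists_max_image (Finset.Icc 1 n) (fun i => (a + b * i).factorization p) hne
    set K : ℕ := (a + b * i0).factorization p with hKdef
    set B : ℕ := a + b * n with hBdef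
    have hBn : n ≤ B := by
      have : n ≤ b * n := Nat.le_mul_of_pos_left n hb
      omega
    have hpowB : ∀ i ∈ Finset.Icc 1 n, a + b * i ≤ p ^ B := by
      intro i hi
      simp only [Finset.mem_Icc] at hi
      have h1 : a + b * i ≤ B := by
        have : b * i ≤ b * n := Nat.mul_le_mul_left b hi.2
        omega
      have h2 : B < 2 ^ B := Nat.lt_two_pow_self
      have h3 : 2 ^ B ≤ p ^ B := Nat.pow_le_pow_left pp.two_le B
      omega
    -- factorization of N as a sum
    have hvN : N.factorization p = ∑ i ∈ Finset.Icc 1 n, (a + b * i).factorization p := by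
      rw [hNdef, Nat.factorization_prod (fun i _ => by positivity)]
      simp [Finsupp.finset_sum_apply]
    have hterm : ∀ i ∈ Finset.Icc 1 n, (a + b * i).factorization p =
        ((Finset.Icc 1 B).filter (fun k => p ^ k ∣ a + b * i)).card := by
      intro i hi
      rw [Nat.factorization_eq_card_pow_dvd _ pp,
        Nat.Ico_filter_pow_dvd_eq pp (by positivity) (hpowB i hi)]
    have hswap : N.factorization p =
        ∑ k ∈ Finset.Icc 1 B, ((Finset.Icc 1 n).filter (fun i => p ^ k ∣ a + b * i)).card := by
      rw [hvN, Finset.sum_congr rfl hterm]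
      simp only [Finset.card_filter]
      rw [Finset.sum_comm]
    -- factorization of n!
    haveI : Fact p.Prime := ⟨pp⟩
    have hvfac : (n.factorial).factorization p = ∑ k ∈ Finset.Icc 1 B, n / p ^ k := by
      rw [Nat.factorization_def _ pp, padicValNat_factorial
        (lt_of_le_of_lt (Nat.log_le_self p n) (by omega : n < B + 1)),
        ← Finset.Ico_add_one_right_eq_Icc]
    -- bound each term
    have hbound : ∀ k ∈ Finset.Icc 1 B,
        ((Finset.Icc 1 n).filter (fun i => p ^ k ∣ a + b * i)).card ≤
          n / p ^ k + (if k ≤ K then 1 else 0) := by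
      intro k hk
      by_cases hkK : k ≤ K
      · simp only [hkK, if_true]
        exact count_bound a b (p ^ k) n (pow_pos pp.pos k) (hcoppb.pow_left k)
      · simp only [hkK, if_false]
        have hempty : (Finset.Icc 1 n).filter (fun i => p ^ k ∣ a + b * i) = ∅ := by
          apply Finset.filter_eq_empty_iff.mpr
          intro i hi hdvd
          have : k ≤ (a + b * i).factorization p :=
            (Nat.Prime.pow_dvd_iff_le_factorization pp (by positivity)).mp hdvd
          have := hi0max i hi
          omega
        rw [hempty]
        simp
    have hsum : N.factorization p ≤ (n.factorial).factorization p + K := by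
      rw [hswap, hvfac]
      calc ∑ k ∈ Finset.Icc 1 B, ((Finset.Icc 1 n).filter (fun i => p ^ k ∣ a + b * i)).card
          ≤ ∑ k ∈ Finset.Icc 1 B, (n / p ^ k + (if k ≤ K then 1 else 0)) :=
            Finset.sum_le_sum hbound
        _ = (∑ k ∈ Finset.Icc 1 B, n / p ^ k) +
            ∑ k ∈ Finset.Icc 1 B, (if k ≤ K then 1 else 0) := Finset.sum_add_distrib
        _ ≤ (∑ k ∈ Finset.Icc 1 B, n / p ^ k) + K := by
            gcongr
            calc ∑ k ∈ Finset.Icc 1 B, (if k ≤ K then 1 else 0)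
                = ((Finset.Icc 1 B).filter (fun k => k ≤ K)).card :=
                  (Finset.card_filter _ _).symm
              _ ≤ (Finset.Icc 1 K).card := by
                  apply Finset.card_le_card
                  intro k hk
                  simp only [Finset.mem_filter, Finset.mem_Icc] at hk ⊢
                  omega
              _ = K := by simp
    -- conclude v_p P ≤ K
    have hmul : P.factorization p + d.factorization p = N.factorization p := by
      rw [← hPd, Nat.factorization_mul hP0 hd0]
      simp
    have hdfac : d.factorization p =
        min (N.factorization p) ((n.factorial).factorization p) := by
      rw [hddef, Nat.factorization_gcd hN0 (Nat.factorial_ne_zero n)]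
      simp [Finsupp.inf_apply]
    have hvP : P.factorization p ≤ K := by omega
    exact ⟨i0, hi0mem, (pow_dvd_pow p hvP).trans (Nat.ordProj_dvd _ p)⟩
  -- construct f
  set g : ℕ → ℕ := fun p =>
    if h : p.Prime ∧ p ∣ P then (key p h.1 h.2).choose else 1 with hgdef
  have hg : ∀ p ∈ P.primeFactors,
      g p ∈ Finset.Icc 1 n ∧ p ^ P.factorization p ∣ a + b * g p := by
    intro p hp
    rw [Nat.mem_primeFactors] at hp
    have h : p.Prime ∧ p ∣ P := ⟨hp.1, hp.2.1⟩
    simp only [hgdef, dif_pos h]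
    exact (key p h.1 h.2).choose_spec
  set f : ℕ → ℕ := fun i =>
    ∏ p ∈ P.primeFactors.filter (fun p => g p = i), p ^ P.factorization p with hfdef
  refine ⟨P, Q, Nat.pos_of_ne_zero hP0, Nat.pos_of_ne_zero hQ0, hcopPQ, heq, f, ?_, ?_, ?_⟩
  · -- P = ∏ f i
    have h1 : ∏ i ∈ Finset.Icc 1 n, f i =
        ∏ p ∈ P.primeFactors, p ^ P.factorization p :=
      Finset.prod_fiberwise_of_maps_to (fun p hp => (hg p hp).1) _
    have h2 : ∏ p ∈ P.primeFactors, p ^ P.factorization p = P := by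
      have := Nat.factorization_prod_pow_eq_self hP0
      rwa [Finsupp.prod, Nat.support_factorization] at this
    rw [h1, h2]
  · intro i hi
    constructor
    · apply Finset.prod_pos
      intro p hp
      simp only [Finset.mem_filter] at hp
      exact pow_pos (Nat.prime_of_mem_primeFactors hp.1).pos _
    · apply aux_prod_dvd
      · intro p hp q hq hpq
        simp only [Finset.mem_filter] at hp hq
        exact Nat.Coprime.pow _ _ ((Nat.coprime_primes (Nat.prime_of_mem_primeFactors hp.1)
          (Nat.prime_of_mem_primeFactors hq.1)).mpr hpq)
      · intro p hp
        simp only [Finset.mem_filter] at hp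
        have := (hg p hp.1).2
        rwa [hp.2] at this
  · intro i hi j hj hij
    apply Nat.Coprime.prod_left
    intro p hp
    apply Nat.Coprime.prod_right
    intro q hq
    simp only [Finset.mem_filter] at hp hq
    have hpq : p ≠ q := by
      intro h
      rw [h, hq.2] at hp
      exact hij hp.2.symm
    exact Nat.Coprime.pow _ _ ((Nat.coprime_primes (Nat.prime_of_mem_primeFactors hp.1)
      (Nat.prime_of_mem_primeFactors hq.1)).mpr hpq)
end

section
/- For every positive integer n > 1 and positive integers a, b with gcd(a, b) = 1 and gcd(n!, b) = 1, if none of the integers a + b·i for i = 1, ..., n divides lcm(1, 2, ..., n-1), then the product (a+b)(a+2b)···(a+nb) has at least n distinct prime factors. -/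
theorem stmt10 (n a b : ℕ) (hn : 1 < n) (ha : 0 < a) (hb : 0 < b)
    (hab : Nat.gcd a b = 1) (hnb : Nat.gcd n.factorial b = 1)
    (hnd : ∀ i ∈ Finset.Icc 1 n, ¬ (a + b * i ∣ (Finset.Icc 1 (n - 1)).lcm id)) :
    n ≤ (∏ i ∈ Finset.Icc 1 n, (a + b * i)).primeFactors.card := by
  set L : ℕ := (Finset.Icc 1 (n - 1)).lcm id with hL
  have hL0 : L ≠ 0 := by
    rw [hL, Ne, Finset.lcm_eq_zero_iff]; simp
  have hm0 : ∀ i : ℕ, (a + b * i) ≠ 0 := fun i => by positivity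
  -- each factor has a prime whose full power exceeds n-1
  have key : ∀ i ∈ Finset.Icc 1 n, ∃ p, p.Prime ∧ p ∣ (a + b * i) ∧
      n ≤ p ^ ((a + b * i).factorization p) := by
    intro i hi
    by_contra h
    push_neg at h
    apply hnd i hi
    rw [← Nat.factorization_le_iff_dvd (hm0 i) hL0]
    intro p
    rcases Nat.eq_zero_or_pos ((a + b * i).factorization p) with h0 | hv
    · simp [h0]
    have hp : p.Prime := by
      have hmem : p ∈ (a + b * i).factorization.support := Finsupp.mem_support_iff.mpr hv.ne'
      rw [Nat.support_factorization] at hmem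
      exact Nat.prime_of_mem_primeFactors hmem
    have hpd : p ∣ a + b * i := Nat.dvd_of_factorization_pos hv.ne'
    have hlt : p ^ ((a + b * i).factorization p) < n := h p hp hpd
    have hdvdL : p ^ ((a + b * i).factorization p) ∣ L := by
      apply Finset.dvd_lcm
      simp only [Finset.mem_Icc]
      constructor
      · exact Nat.one_le_iff_ne_zero.mpr (pow_ne_zero _ hp.ne_zero)
      · omega
    exact (Nat.Prime.pow_dvd_iff_le_factorization hp hL0).mp hdvdL
  -- choose the prime for each i (as a total function)
  have key' : ∀ i : ℕ, ∃ p, i ∈ Finset.Icc 1 n → (p.Prime ∧ p ∣ (a + b * i) ∧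
      n ≤ p ^ ((a + b * i).factorization p)) := by
    intro i
    by_cases hi : i ∈ Finset.Icc 1 n
    · exact (key i hi).imp fun p hp _ => hp
    · exact ⟨2, fun h => absurd h hi⟩
  choose f hf using key'
  have hprod0 : (∏ i ∈ Finset.Icc 1 n, (a + b * i)) ≠ 0 :=
    Finset.prod_ne_zero_iff.mpr fun i _ => hm0 i
  have hmaps : ∀ i ∈ Finset.Icc 1 n, f i ∈ (∏ i ∈ Finset.Icc 1 n, (a + b * i)).primeFactors := by
    intro i hi
    obtain ⟨hp, hd, _⟩ := hf i hi
    exact Nat.mem_primeFactors.mpr ⟨hp, hd.trans (Finset.dvd_prod_of_mem _ hi), hprod0⟩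
  -- injectivity
  have hinj0 : ∀ i ∈ Finset.Icc 1 n, ∀ j ∈ Finset.Icc 1 n, i < j → f i = f j → False := by
    intro i hi j hj hij heq
    obtain ⟨hp, hdi, hni⟩ := hf i hi
    obtain ⟨_, hdj, hnj⟩ := hf j hj
    rw [← heq] at hdj hnj
    set p := f i
    set e := min ((a + b * i).factorization p) ((a + b * j).factorization p) with he
    have hpei : p ^ e ∣ a + b * i :=
      (Nat.Prime.pow_dvd_iff_le_factorization hp (hm0 i)).mpr (min_le_left _ _)
    have hpej : p ^ e ∣ a + b * j :=
      (Nat.Prime.pow_dvd_iff_le_factorization hp (hm0 j)).mpr (min_le_right _ _)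
    have hne : n ≤ p ^ e := by
      rcases min_cases ((a + b * i).factorization p) ((a + b * j).factorization p) with
        ⟨h1, _⟩ | ⟨h1, _⟩ <;> rw [he, h1] <;> assumption
    have hji : i + (j - i) = j := Nat.add_sub_cancel' hij.le
    have hsum : a + b * j = (a + b * i) + b * (j - i) := by
      conv_lhs => rw [← hji]
      ring
    have hsub : p ^ e ∣ b * (j - i) := by
      rw [hsum] at hpej
      exact (Nat.dvd_add_right hpei).mp hpej
    have hpb : ¬ p ∣ b := by
      intro hpbd
      have hpa : p ∣ a := by
        have := Nat.dvd_sub hdi (hpbd.mul_right i)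
        simpa using this
      have h1 : p ∣ 1 := hab ▸ Nat.dvd_gcd hpa hpbd
      exact hp.one_lt.ne' (Nat.dvd_one.mp h1)
    have hcop : (p ^ e).Coprime b :=
      Nat.Coprime.pow_left _ ((Nat.Prime.coprime_iff_not_dvd hp).mpr hpb)
    have hdji : p ^ e ∣ j - i := hcop.dvd_of_dvd_mul_left hsub
    have hle : p ^ e ≤ j - i := Nat.le_of_dvd (by omega) hdji
    simp only [Finset.mem_Icc] at hi hj
    omega
  have hinj : Set.InjOn f ↑(Finset.Icc 1 n) := by
    intro i hi j hj heq
    by_contra hne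
    rcases Nat.lt_or_ge i j with h | h
    · exact hinj0 i hi j hj h heq
    · exact hinj0 j hj i hi (lt_of_le_of_ne h (Ne.symm hne)) heq.symm
  calc n = (Finset.Icc 1 n).card := by simp
    _ ≤ _ := Finset.card_le_card_of_injOn f hmaps hinj
end

section
/- For positive integers m and n, the quotient (m+1)(m+2)···(m+n)/n! can be written as ∏_{i=1}^n a_i where each a_i is a positive integer dividing m+i and gcd(a_i, a_j) = 1 for all 1 ≤ i ≠ j ≤ n. -/
open Finset

lemma key (m n : ℕ) (hn : 0 < n) (p : ℕ) (hp : p.Prime) :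
    ∃ i ∈ Finset.Icc 1 n, p ^ ((Nat.choose (m+n) n).factorization p) ∣ m + i := by
  set e := (Nat.choose (m+n) n).factorization p with he
  rcases Nat.eq_zero_or_pos e with h0 | hpos
  · exact ⟨1, Finset.mem_Icc.mpr ⟨le_refl 1, hn⟩, by simp [h0]⟩
  have hBpos : 0 < Nat.choose (m+n) n := Nat.choose_pos (Nat.le_add_left n m)
  have := Fact.mk hp
  set b := Nat.log p (m + n) + 1 with hb
  have hnb : Nat.log p (m + n) < b := Nat.lt_succ_self _
  have hmult := Nat.Prime.emultiplicity_choose' hp (n := m) (k := n) hnb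
  have hfac : (e : ℕ∞) = emultiplicity p (Nat.choose (m+n) n) := by
    rw [he, Nat.factorization_def _ hp, padicValNat_eq_emultiplicity hBpos.ne']
  set S := {i ∈ Ico 1 b | p ^ i ≤ n % p ^ i + m % p ^ i} with hS
  have hcard : S.card = e := by
    have : (e : ℕ∞) = (S.card : ℕ∞) := by rw [hfac, hmult]
    exact_mod_cast this.symm
  have hne : S.Nonempty := card_pos.mp (hcard ▸ hpos)
  set k := S.max' hne with hk
  have hkS : k ∈ S := S.max'_mem hne
  have hek : e ≤ k := by
    rw [← hcard]
    have hsub : S ⊆ Finset.Icc 1 k := by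
      intro x hx
      have h1 : x ∈ Ico 1 b := Finset.mem_of_mem_filter x hx
      exact Finset.mem_Icc.mpr ⟨(Finset.mem_Ico.mp h1).1, S.le_max' x hx⟩
    calc S.card ≤ (Finset.Icc 1 k).card := Finset.card_le_card hsub
      _ = k := by simp
  obtain ⟨hk1, hcarry⟩ := Finset.mem_filter.mp hkS
  set q := p ^ k with hq
  have hqpos : 0 < q := pow_pos hp.pos k
  have hmod : m % q < q := Nat.mod_lt _ hqpos
  have hnq : n % q ≤ n := Nat.mod_le _ _
  have hr : 0 < m % q := by
    rcases Nat.eq_zero_or_pos (m % q) with h | h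
    · exfalso; have := Nat.mod_lt n hqpos; omega
    · exact h
  refine ⟨q - m % q, Finset.mem_Icc.mpr ⟨by omega, by omega⟩, ?_⟩
  have hdvd : q ∣ m + (q - m % q) := by
    have hdm := Nat.div_add_mod m q
    have hmul : q * (m / q + 1) = q * (m / q) + q := by ring
    exact ⟨m / q + 1, by omega⟩
  exact dvd_trans (pow_dvd_pow p hek) hdvd

lemma prodDvd (t : Finset ℕ) (s : ℕ → ℕ) (z : ℕ)
    (hc : ∀ p ∈ t, ∀ q ∈ t, p ≠ q → Nat.Coprime (s p) (s q))
    (hd : ∀ p ∈ t, s p ∣ z) : ∏ p ∈ t, s p ∣ z := by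
  induction t using Finset.cons_induction with
  | empty => simp
  | cons a t ha ih =>
    rw [Finset.prod_cons]
    refine Nat.Coprime.mul_dvd_of_dvd_of_dvd ?_ (hd a (Finset.mem_cons_self a t)) ?_
    · exact Nat.coprime_prod_right_iff.mpr fun q hq =>
        hc a (Finset.mem_cons_self a t) q (Finset.mem_cons_of_mem hq)
          (fun h => ha (h ▸ hq))
    · exact ih (fun p hp q hq hne => hc p (Finset.mem_cons_of_mem hp) q
        (Finset.mem_cons_of_mem hq) hne) (fun p hp => hd p (Finset.mem_cons_of_mem hp))

lemma asc (m : ℕ) : ∀ n, ∏ i ∈ Finset.range n, (m + 1 + i) = (m+1).ascFactorial n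
  | 0 => by simp
  | k+1 => by rw [Finset.prod_range_succ, asc m k, Nat.ascFactorial_succ, mul_comm]

theorem stmt15 (m n : ℕ) (hm : 0 < m) (hn : 0 < n) :
    ∃ f : ℕ → ℕ,
      (∏ i ∈ Finset.Icc 1 n, (m + i)) / n.factorial =
        ∏ i ∈ Finset.Icc 1 n, f i ∧
      (∀ i ∈ Finset.Icc 1 n, 0 < f i ∧ f i ∣ m + i) ∧
      (∀ i ∈ Finset.Icc 1 n, ∀ j ∈ Finset.Icc 1 n, i ≠ j →
        Nat.gcd (f i) (f j) = 1) := by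
  classical
  set B := Nat.choose (m+n) n with hB
  have hBpos : 0 < B := Nat.choose_pos (Nat.le_add_left n m)
  have hex : ∀ p : ℕ, ∃ i, i ∈ Finset.Icc 1 n ∧ (p.Prime → p ^ (B.factorization p) ∣ m + i) := by
    intro p
    by_cases hp : p.Prime
    · obtain ⟨i, hi, hd⟩ := key m n hn p hp
      exact ⟨i, hi, fun _ => hd⟩
    · exact ⟨1, Finset.mem_Icc.mpr ⟨le_refl 1, hn⟩, fun h => absurd h hp⟩
  choose g hg1 hg2 using hex
  refine ⟨fun i => ∏ p ∈ B.primeFactors.filter (fun p => g p = i), p ^ (B.factorization p),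
    ?_, ?_, ?_⟩
  · -- product equality
    have hlhs : (∏ i ∈ Finset.Icc 1 n, (m + i)) = n.factorial * B := by
      have h1 : (∏ i ∈ Finset.Icc 1 n, (m + i)) = (m+1).ascFactorial n := by
        rw [← Finset.Ico_add_one_right_eq_Icc, Finset.prod_Ico_eq_prod_range]
        simp only [Nat.add_sub_cancel, ← Nat.add_assoc]
        exact asc m n
      rw [h1, Nat.ascFactorial_eq_factorial_mul_choose]
    rw [hlhs, Nat.mul_div_cancel_left _ n.factorial_pos]
    rw [Finset.prod_fiberwise_of_maps_to (fun p hp => hg1 p)]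
    conv_lhs => rw [← Nat.factorization_prod_pow_eq_self hBpos.ne']
    rw [Nat.prod_factorization_eq_prod_primeFactors]
  · intro i hi
    constructor
    · exact Finset.prod_pos fun p hp =>
        pow_pos (Nat.prime_of_mem_primeFactors (Finset.mem_of_mem_filter p hp)).pos _
    · apply prodDvd
      · intro p hp q hq hne
        have hpp := Nat.prime_of_mem_primeFactors (Finset.mem_of_mem_filter p hp)
        have hqp := Nat.prime_of_mem_primeFactors (Finset.mem_of_mem_filter q hq)
        exact Nat.Coprime.pow _ _ ((Nat.coprime_primes hpp hqp).mpr hne)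
      · intro p hp
        have hmem := Finset.mem_filter.mp hp
        have := hg2 p (Nat.prime_of_mem_primeFactors hmem.1)
        rwa [hmem.2] at this
  · intro i hi j hj hij
    apply Nat.coprime_prod_left_iff.mpr
    intro p hp
    apply Nat.coprime_prod_right_iff.mpr
    intro q hq
    have hmp := Finset.mem_filter.mp hp
    have hmq := Finset.mem_filter.mp hq
    have hpp := Nat.prime_of_mem_primeFactors hmp.1
    have hqp := Nat.prime_of_mem_primeFactors hmq.1
    have hne : p ≠ q := fun h => hij (by rw [← hmp.2, ← hmq.2, h])
    exact Nat.Coprime.pow _ _ ((Nat.coprime_primes hpp hqp).mpr hne)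
end

section
/- For any positive integers n, a, b with gcd(a, b) = 1 and gcd(n!, b) = 1, and for each prime p ≤ n, there exists an index 1 ≤ r ≤ n with v_p(a + b·r) = max_{1 ≤ i ≤ n} v_p(a + b·i), and removing this term still leaves enough p-divisibility: v_p(∏_{i=1}^n (a+b·i)) - v_p(a + b·r) ≥ v_p(n!) - max_{1 ≤ i ≤ n} v_p(a+b·i). -/
open Finset

/-- Counting lemma: among `i ∈ [1,n]`, at least `n/m` satisfy `m ∣ a + b*i`,
when `b` is coprime to `m`. -/
lemma count_dvd_aux (a b m n : ℕ) (hm : 0 < m) (hcop : Nat.Coprime b m) :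
    n / m ≤ ((Finset.Icc 1 n).filter (fun i => m ∣ a + b * i)).card := by
  haveI : NeZero m := ⟨hm.ne'⟩
  set u : ZMod m := -(a : ZMod m) * (b : ZMod m)⁻¹ with hu
  have hbu : IsUnit (b : ZMod m) := (ZMod.isUnit_iff_coprime b m).2 hcop
  have key : m ∣ a + b * u.val := by
    rw [← ZMod.natCast_eq_zero_iff]
    push_cast
    rw [ZMod.natCast_val, ZMod.cast_id, hu]
    have : (b : ZMod m) * (-(a : ZMod m) * (b : ZMod m)⁻¹)
        = -(a : ZMod m) * ((b : ZMod m) * (b : ZMod m)⁻¹) := by ring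
    rw [this, ZMod.mul_inv_of_unit _ hbu, mul_one, add_neg_cancel]
  set c : ℕ := if u.val = 0 then m else u.val with hc
  have hc1 : 1 ≤ c := by
    rw [hc]; split
    · exact hm
    · omega
  have hcm : c ≤ m := by
    rw [hc]; split
    · exact le_refl m
    · exact (ZMod.val_lt u).le
  have hdvd : m ∣ a + b * c := by
    rw [hc]
    by_cases h : u.val = 0
    · rw [if_pos h]
      rw [h, mul_zero, add_zero] at key
      exact Dvd.dvd.add key (dvd_mul_left m b)
    · rw [if_neg h]; exact key
  have hcard : (Finset.Icc 1 (n / m)).card = n / m := by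
    simp [Nat.card_Icc]
  rw [← hcard]
  apply Finset.card_le_card_of_injOn (fun j => (j - 1) * m + c)
  · intro j hj
    rw [Finset.mem_coe, Finset.mem_Icc] at hj
    rw [Finset.mem_coe, Finset.mem_filter, Finset.mem_Icc]; beta_reduce
    refine ⟨⟨by omega, ?_⟩, ?_⟩
    · have h5 : (j - 1) * m = j * m - m := by rw [Nat.sub_mul, one_mul]
      have h6 : m ≤ j * m := Nat.le_mul_of_pos_left m (by omega : 0 < j)
      have h3 : j * m ≤ (n / m) * m := Nat.mul_le_mul_right m hj.2
      have h4 : (n / m) * m ≤ n := Nat.div_mul_le_self n m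
      omega
    · have heq : a + b * ((j - 1) * m + c) = (a + b * c) + (b * (j - 1)) * m := by ring
      rw [heq]
      exact dvd_add hdvd (dvd_mul_left m (b * (j - 1)))
  · intro j1 h1 j2 h2 heq
    simp only [Finset.mem_coe, Finset.mem_Icc] at h1 h2
    simp only at heq
    have : (j1 - 1) * m = (j2 - 1) * m := by omega
    have := Nat.eq_of_mul_eq_mul_right hm this
    omega

/-- The valuation of a positive number as a count of divisors. -/
lemma val_eq_count (p K x : ℕ) (hp : p.Prime) (hx : x ≠ 0)
    (hK : padicValNat p x ≤ K) :
    padicValNat p x = ((Finset.Icc 1 K).filter (fun k => p ^ k ∣ x)).card := by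
  have hset : (Finset.Icc 1 K).filter (fun k => p ^ k ∣ x)
      = Finset.Icc 1 (padicValNat p x) := by
    ext k
    simp only [Finset.mem_filter, Finset.mem_Icc]
    rw [Nat.Prime.pow_dvd_iff_le_factorization hp hx, Nat.factorization_def _ hp]
    omega
  rw [hset, Nat.card_Icc]
  omega

lemma val_le_self (p x : ℕ) (hp : p.Prime) (hx : 0 < x) : padicValNat p x ≤ x := by
  have h1 : p ^ padicValNat p x ∣ x := pow_padicValNat_dvd
  have h2 : p ^ padicValNat p x ≤ x := Nat.le_of_dvd hx h1
  have h3 : padicValNat p x < p ^ padicValNat p x :=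
    Nat.lt_pow_self hp.one_lt
  omega

theorem stmt17 (n a b : ℕ) (hn : 0 < n) (ha : 0 < a) (hb : 0 < b)
    (hab : Nat.gcd a b = 1) (hnb : Nat.gcd n.factorial b = 1)
    (p : ℕ) (hp : p.Prime) (hpn : p ≤ n) :
    ∃ r ∈ Finset.Icc 1 n,
      padicValNat p (a + b * r) =
        (Finset.Icc 1 n).sup (fun i => padicValNat p (a + b * i)) ∧
      padicValNat p n.factorial -
          (Finset.Icc 1 n).sup (fun i => padicValNat p (a + b * i)) ≤
        padicValNat p (∏ i ∈ Finset.Icc 1 n, (a + b * i)) -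
          padicValNat p (a + b * r) := by
  haveI : Fact p.Prime := ⟨hp⟩
  have hne : (Finset.Icc 1 n).Nonempty := ⟨1, Finset.mem_Icc.2 ⟨le_refl 1, hn⟩⟩
  obtain ⟨r, hr, hrsup⟩ := Finset.exists_mem_eq_sup (Finset.Icc 1 n) hne
    (fun i => padicValNat p (a + b * i))
  refine ⟨r, hr, hrsup.symm, ?_⟩
  rw [← hrsup]
  apply Nat.sub_le_sub_right
  -- Main claim: v_p(n!) ≤ v_p(∏ (a + b*i))
  -- p does not divide b
  have hpb : Nat.Coprime p b := by
    apply Nat.Coprime.coprime_dvd_left (Nat.dvd_factorial hp.pos hpn) hnb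
  set K := a + b * n with hK
  -- valuation of product as double sum
  have hxne : ∀ i ∈ Finset.Icc 1 n, a + b * i ≠ 0 := fun i _ => by omega
  have hprod : padicValNat p (∏ i ∈ Finset.Icc 1 n, (a + b * i))
      = ∑ i ∈ Finset.Icc 1 n, padicValNat p (a + b * i) := by
    rw [← Nat.factorization_def _ hp, Nat.factorization_prod hxne]
    simp only [Finsupp.finset_sum_apply]
    exact Finset.sum_congr rfl fun i hi => Nat.factorization_def _ hp
  have hvalK : ∀ i ∈ Finset.Icc 1 n, padicValNat p (a + b * i) ≤ K := by
    intro i hi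
    rw [Finset.mem_Icc] at hi
    have h1 : padicValNat p (a + b * i) ≤ a + b * i :=
      val_le_self p _ hp (by omega)
    have : b * i ≤ b * n := Nat.mul_le_mul_left b hi.2
    omega
  have hsum : ∑ i ∈ Finset.Icc 1 n, padicValNat p (a + b * i)
      = ∑ k ∈ Finset.Icc 1 K,
          ((Finset.Icc 1 n).filter (fun i => p ^ k ∣ a + b * i)).card := by
    have h1 : ∀ i ∈ Finset.Icc 1 n, padicValNat p (a + b * i)
        = ∑ k ∈ Finset.Icc 1 K, if p ^ k ∣ a + b * i then 1 else 0 := by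
      intro i hi
      rw [val_eq_count p K _ hp (hxne i hi) (hvalK i hi), Finset.card_filter]
    rw [Finset.sum_congr rfl h1, Finset.sum_comm]
    exact Finset.sum_congr rfl fun k _ => (Finset.card_filter _ _).symm
  have hfact : padicValNat p n.factorial = ∑ k ∈ Finset.Icc 1 K, n / p ^ k := by
    have hlog : Nat.log p n < K + 1 := by
      have := Nat.log_le_self p n
      have : n ≤ b * n := Nat.le_mul_of_pos_left n hb
      omega
    rw [padicValNat_factorial hlog, Finset.Ico_add_one_right_eq_Icc]
  rw [hprod, hsum, hfact]
  apply Finset.sum_le_sum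
  intro k _
  exact count_dvd_aux a b (p ^ k) n (pow_pos hp.pos k)
    ((hpb.pow_left k).symm)
end
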